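/- arXiv:2210.13968 — 2 statements merged into one kernel-verified Lean document; each statement's English description precedes it below -/
import Mathlib

section
/- Suppose (i) f = g ∘ ℬ, where ℬ : E₁ → E₃ is a continuous linear map into a finite-dimensional real inner product space E₃ and g : E₃ → ℝ is differentiable and α_g-strongly convex, and (ii) R_Q is the indicator function of a nonempty compact convex polytope ℱ = {q ∈ E : 𝒞q ≤ b}, where 𝒞 : E → ℝᵖ is a linear map and b ∈ ℝᵖ. Assume the augmented Lagrangian L_ρ has a saddle point, and assume ρ ≥ α_g. Then there exists a constant σ > 0 such that Problem (OP) satisfies the primal quadratic gap property with parameter α_S = α_g/σ: for every q ∈ ℱ, the nearest optimal solution q* := argmin_{p∈𝒫*}‖q − p‖ satisfies, for all w ∈ E₂, ⟨q* − q, ∇_q S(q,w)⟩ ≤ S(q*,w) − S(q,w) − (α_g/(2σ))‖q* − q‖². -/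
open scoped RealInnerProductSpace
open Finset

lemma sum_smul_eq_of_support {E ι : Type*} [AddCommGroup E] [Module ℝ E] [Fintype ι]
    (m : ι → E) (lam : ι → ℝ) (s : Finset ι) (h : ∀ i, lam i ≠ 0 → i ∈ s) :
    ∑ i, lam i • m i = ∑ i ∈ s, lam i • m i := by
  refine (Finset.sum_subset (Finset.subset_univ s) ?_).symm
  intro i _ hi
  have : lam i = 0 := by by_contra h'; exact hi (h i h')
  simp [this]

lemma conic_caratheodory {E ι : Type*} [AddCommGroup E] [Module ℝ E] [Fintype ι]
    (m : ι → E) :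
    ∀ (N : ℕ) (lam : ι → ℝ), ((Finset.univ.filter (fun i => lam i ≠ 0))).card ≤ N →
      (∀ i, 0 ≤ lam i) →
    ∃ μ : ι → ℝ, (∀ i, 0 ≤ μ i) ∧ (∀ i, μ i ≠ 0 → lam i ≠ 0) ∧
      (∑ i, μ i • m i = ∑ i, lam i • m i) ∧
      LinearIndependent ℝ (fun i : {i // μ i ≠ 0} => m i) := by
  classical
  intro N
  induction N with
  | zero =>
    intro lam hcard _
    have hlam : ∀ i, lam i = 0 := by
      intro i
      by_contra h'
      have : i ∈ (Finset.univ.filter (fun i => lam i ≠ 0)) := by simp [h']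
      have := Finset.card_pos.mpr ⟨i, this⟩
      omega
    refine ⟨lam, fun i => (hlam i).ge, fun i h => h, rfl, ?_⟩
    have : IsEmpty {i // lam i ≠ 0} := ⟨fun ⟨i, hi⟩ => hi (hlam i)⟩
    exact linearIndependent_empty_type
  | succ N ih =>
    intro lam hcard hlam
    by_cases hind : LinearIndependent ℝ (fun i : {i // lam i ≠ 0} => m i)
    · exact ⟨lam, hlam, fun i h => h, rfl, hind⟩
    · obtain ⟨gc, hgsum, i₀, hgi₀⟩ := Fintype.not_linearIndependent_iff.mp hind
      have hex : ∃ g : {i // lam i ≠ 0} → ℝ, ∑ i, g i • m ↑i = 0 ∧ ∃ i, 0 < g i := by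
        rcases lt_or_gt_of_ne hgi₀ with h | h
        · refine ⟨-gc, by simpa using hgsum, i₀, by simpa using h⟩
        · exact ⟨gc, hgsum, i₀, h⟩
      obtain ⟨g, hgsum, iw, hiw⟩ := hex
      set ν : ι → ℝ := fun i => if h : lam i ≠ 0 then g ⟨i, h⟩ else 0 with hν
      have hν0 : ∀ i, ν i ≠ 0 → lam i ≠ 0 := by
        intro i hi
        by_contra h'
        apply hi
        simp [hν, h']
      have hνsum : ∑ i, ν i • m i = 0 := by
        rw [sum_smul_eq_of_support m ν (Finset.univ.filter (fun i => lam i ≠ 0))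
          (fun i hi => by simpa using hν0 i hi)]
        rw [Finset.sum_subtype (p := fun i => lam i ≠ 0) _ (by simp)]
        · rw [← hgsum]
          apply Finset.sum_congr rfl
          intro i _
          simp [hν, i.2]
      have hνpos : ∃ i, 0 < ν i := ⟨iw, by simpa [hν, iw.2] using hiw⟩
      set posset := (Finset.univ.filter (fun i => 0 < ν i)) with hposset
      have hpne : posset.Nonempty := ⟨hνpos.choose, by simp [hposset, hνpos.choose_spec]⟩
      set t := posset.inf' hpne (fun i => lam i / ν i) with ht
      obtain ⟨i₁, hi₁mem, hi₁⟩ := Finset.exists_mem_eq_inf' hpne (fun i => lam i / ν i)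
      have hνi₁ : 0 < ν i₁ := by simpa [hposset] using hi₁mem
      have htnn : 0 ≤ t := by
        rw [ht, hi₁]
        exact div_nonneg (hlam i₁) hνi₁.le
      set μ' : ι → ℝ := fun i => lam i - t * ν i with hμ'
      have hμ'nn : ∀ i, 0 ≤ μ' i := by
        intro i
        rcases le_or_gt (ν i) 0 with h | h
        · have : t * ν i ≤ 0 := mul_nonpos_of_nonneg_of_nonpos htnn h
          simp only [hμ']
          linarith [hlam i]
        · have : t ≤ lam i / ν i := Finset.inf'_le _ (by simp [hposset, h])
          have := (le_div_iff₀ h).mp this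
          simp only [hμ']
          linarith
      have hμ'supp : ∀ i, μ' i ≠ 0 → lam i ≠ 0 := by
        intro i hi
        by_contra h'
        apply hi
        have : ν i = 0 := by simp [hν, h']
        simp [hμ', h', this]
      have hμ'i₁ : μ' i₁ = 0 := by
        show lam i₁ - t * ν i₁ = 0
        rw [ht, hi₁]
        field_simp
        ring
      have hcard' : ((Finset.univ.filter (fun i => μ' i ≠ 0))).card ≤ N := by
        have hsub : (Finset.univ.filter (fun i => μ' i ≠ 0)) ⊆ ((Finset.univ.filter (fun i => lam i ≠ 0))).erase i₁ := by
          intro i hi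
          simp only [Finset.mem_filter, Finset.mem_univ, true_and] at hi
          refine Finset.mem_erase.mpr ⟨?_, by simp [hμ'supp i hi]⟩
          rintro rfl
          exact hi hμ'i₁
        have h1 := Finset.card_le_card hsub
        have hmem : i₁ ∈ (Finset.univ.filter (fun i => lam i ≠ 0)) := by
          simp [hν0 i₁ (ne_of_gt hνi₁)]
        rw [Finset.card_erase_of_mem hmem] at h1
        omega
      have hsum' : ∑ i, μ' i • m i = ∑ i, lam i • m i := by
        simp only [hμ', sub_smul, mul_smul, Finset.sum_sub_distrib]
        rw [← Finset.smul_sum, hνsum, smul_zero, sub_zero]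
      obtain ⟨μ, h1, h2, h3, h4⟩ := ih μ' hcard' hμ'nn
      exact ⟨μ, h1, fun i hi => hμ'supp i (h2 i hi), h3.trans hsum', h4⟩

section comb
variable {E ι : Type*} [AddCommGroup E] [Module ℝ E] [Fintype ι]

/-- the linear map sending coefficients to the linear combination -/
def combMap (m : ι → E) : (ι → ℝ) →ₗ[ℝ] E where
  toFun := fun g => ∑ i, g i • m i
  map_add' := by intros; simp [add_smul, Finset.sum_add_distrib]
  map_smul' := by intros; simp [mul_smul, Finset.smul_sum]

lemma combMap_apply (m : ι → E) (g : ι → ℝ) : combMap m g = ∑ i, g i • m i := rfl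

lemma sum_coe_sort_smul (m : ι → E) (s : Finset ι) (lam : ι → ℝ)
    (h : ∀ i, lam i ≠ 0 → i ∈ s) :
    ∑ i : ↥s, lam ↑i • m ↑i = ∑ i, lam i • m i := by
  rw [Finset.sum_coe_sort s (fun i => lam i • m i)]
  refine Finset.sum_subset (Finset.subset_univ s) ?_
  intro i _ hi
  have : lam i = 0 := by by_contra h'; exact hi (h i h')
  simp [this]

end comb

lemma indep_coeff_bound {E ι : Type*} [NormedAddCommGroup E] [InnerProductSpace ℝ E]
    [FiniteDimensional ℝ E] [Fintype ι] (m : ι → E) (s : Finset ι) :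
    ∃ c : ℝ, 0 < c ∧ (LinearIndependent ℝ (fun i : s => m i) →
      ∀ lam : ι → ℝ, (∀ i, lam i ≠ 0 → i ∈ s) → ∀ j, |lam j| ≤ c * ‖∑ i, lam i • m i‖) := by
  classical
  by_cases hind : LinearIndependent ℝ (fun i : s => m i)
  · set T : (↥s → ℝ) →ₗ[ℝ] E := combMap (fun i : s => m i) with hT
    have hinj : Function.Injective T := by
      intro g₁ g₂ hg
      have : T (g₁ - g₂) = 0 := by rw [map_sub, hg, sub_self]
      have hz := Fintype.linearIndependent_iff.mp hind (g₁ - g₂) this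
      funext i
      have := hz i
      simp only [Pi.sub_apply] at this
      linarith
    obtain ⟨K, hKpos, hK⟩ := T.exists_antilipschitzWith (LinearMap.ker_eq_bot.mpr hinj)
    refine ⟨K, hKpos, fun _ lam hsupp j => ?_⟩
    have key : ∀ g : ↥s → ℝ, ‖g‖ ≤ K * ‖T g‖ := by
      intro g
      have := hK.le_mul_dist g 0
      simpa [dist_zero_right, map_zero] using this
    set g : ↥s → ℝ := fun i => lam ↑i with hg
    have hTg : T g = ∑ i, lam i • m i := by
      rw [hT, combMap_apply]
      exact sum_coe_sort_smul m s lam hsupp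
    by_cases hj : j ∈ s
    · calc |lam j| = ‖g ⟨j, hj⟩‖ := by simp [hg]
        _ ≤ ‖g‖ := norm_le_pi_norm g ⟨j, hj⟩
        _ ≤ K * ‖T g‖ := key g
        _ = K * ‖∑ i, lam i • m i‖ := by rw [hTg]
    · have : lam j = 0 := by by_contra h'; exact hj (hsupp j h')
      rw [this]
      simp
      positivity
  · exact ⟨1, one_pos, fun h => absurd h hind⟩

theorem hoffman_bound {E ι : Type*} [NormedAddCommGroup E] [InnerProductSpace ℝ E]
    [FiniteDimensional ℝ E] [Fintype ι] (m : ι → E) (d : ι → ℝ)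
    (hne : ∃ z : E, ∀ i, ⟪m i, z⟫ ≤ d i) :
    ∃ σ : ℝ, 0 < σ ∧ ∀ q : E, ∃ p : E, (∀ i, ⟪m i, p⟫ ≤ d i) ∧
      ‖q - p‖ ≤ σ * ∑ i, max (⟪m i, q⟫ - d i) 0 := by
  classical
  choose c hcpos hcprop using fun s => indep_coeff_bound m s
  set σ : ℝ := ∑ s : Finset ι, c s with hσ
  have hσpos : 0 < σ := Finset.sum_pos (fun s _ => hcpos s) ⟨∅, Finset.mem_univ _⟩
  have hcle : ∀ s : Finset ι, c s ≤ σ :=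
    fun s => Finset.single_le_sum (fun s _ => (hcpos s).le) (Finset.mem_univ s)
  refine ⟨σ, hσpos, fun q => ?_⟩
  set P : Set E := {z | ∀ i, ⟪m i, z⟫ ≤ d i} with hP
  have hmax_nonneg : (0:ℝ) ≤ ∑ i, max (⟪m i, q⟫ - d i) 0 :=
    Finset.sum_nonneg fun i _ => le_max_right _ 0
  have hPclosed : IsClosed P := by
    have : P = ⋂ i, {z | ⟪m i, z⟫ ≤ d i} := by ext z; simp [hP, Set.mem_iInter]
    rw [this]
    exact isClosed_iInter fun i =>
      isClosed_le (continuous_const.inner continuous_id) continuous_const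
  have hPconv : Convex ℝ P := by
    have : P = ⋂ i, {z | ⟪m i, z⟫ ≤ d i} := by ext z; simp [hP, Set.mem_iInter]
    rw [this]
    exact convex_iInter fun i => convex_halfSpace_le
      ⟨fun x y => inner_add_right _ _ _, fun r x => real_inner_smul_right _ _ _⟩ (d i)
  obtain ⟨p, hpP, hproj⟩ :=
    exists_norm_eq_iInf_of_complete_convex hne (hPclosed.isComplete) hPconv q
  have variational := (norm_eq_iInf_iff_real_inner_le_zero hPconv hpP).mp hproj
  set v : E := q - p with hv
  by_cases hv0 : v = 0
  · refine ⟨p, hpP, ?_⟩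
    rw [← hv, hv0, norm_zero]
    positivity
  -- the cone generated by the active constraints
  set CA : Set E := {x | ∃ lam : ι → ℝ, (∀ i, 0 ≤ lam i) ∧
      (∀ i, lam i ≠ 0 → ⟪m i, p⟫ = d i) ∧ x = ∑ i, lam i • m i} with hCA
  have hCAconv : Convex ℝ CA := by
    rintro x ⟨l₁, hl₁nn, hl₁a, rfl⟩ y ⟨l₂, hl₂nn, hl₂a, rfl⟩ a b ha hb hab
    refine ⟨fun i => a * l₁ i + b * l₂ i,
      fun i => add_nonneg (mul_nonneg ha (hl₁nn i)) (mul_nonneg hb (hl₂nn i)),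
      fun i hi => ?_, ?_⟩
    · by_cases h1 : l₁ i ≠ 0
      · exact hl₁a i h1
      by_cases h2 : l₂ i ≠ 0
      · exact hl₂a i h2
      · push_neg at h1 h2
        exfalso; apply hi; simp [h1, h2]
    · rw [Finset.smul_sum, Finset.smul_sum, ← Finset.sum_add_distrib]
      apply Finset.sum_congr rfl
      intro i _
      rw [add_smul, mul_smul, mul_smul]
  have hCA0 : (0:E) ∈ CA := ⟨0, fun i => le_refl 0, by simp, by simp⟩
  -- CA is closed: finite union of closed images of orthants under injective linear maps
  have hCAclosed : IsClosed CA := by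
    set Ds : Finset ι → Set E :=
      fun s => (combMap (fun i : s => m i)) '' {g | ∀ i, 0 ≤ g i} with hDs
    have hCAeq : CA = ⋃ s ∈ {s : Finset ι | LinearIndependent ℝ (fun i : s => m i) ∧
        ∀ i ∈ s, ⟪m i, p⟫ = d i}, Ds s := by
      ext x
      constructor
      · rintro ⟨lam, hnn, hact, rfl⟩
        obtain ⟨μ, hμnn, hμsupp, hμsum, hμind⟩ :=
          conic_caratheodory m ((Finset.univ.filter (fun i => lam i ≠ 0)).card) lam le_rfl hnn
        set s : Finset ι := Finset.univ.filter (fun i => μ i ≠ 0) with hs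
        have hmem : ∀ i, μ i ≠ 0 → i ∈ s := by intro i hi; simp [hs, hi]
        have hfs : ∀ i : ↥s, μ (↑i) ≠ 0 := fun i => (Finset.mem_filter.mp i.2).2
        have hind : LinearIndependent ℝ (fun i : s => m i) :=
          hμind.comp (fun i : ↥s => (⟨↑i, hfs i⟩ : {i // μ i ≠ 0}))
            (fun a b hab => by
              apply Subtype.ext
              have := congrArg Subtype.val hab
              simpa using this)
        refine Set.mem_biUnion ⟨hind, fun i hi => hact i (hμsupp i (by simpa [hs] using hi))⟩ ?_
        refine ⟨fun i => μ ↑i, fun i => hμnn ↑i, ?_⟩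
        rw [combMap_apply, sum_coe_sort_smul m s μ hmem, hμsum]
      · intro hx
        simp only [Set.mem_iUnion] at hx
        obtain ⟨s, ⟨_, hsact⟩, g, hgnn, rfl⟩ := hx
        refine ⟨fun i => if h : i ∈ s then g ⟨i, h⟩ else 0, fun i => ?_, fun i hi => ?_, ?_⟩
        · by_cases h : i ∈ s <;> simp [h, hgnn ⟨i, _⟩]
        · by_cases h : i ∈ s
          · exact hsact i h
          · simp [h] at hi
        · rw [combMap_apply, ← sum_coe_sort_smul m s _ (fun i hi => by
            by_contra h; simp [h] at hi)]
          apply Finset.sum_congr rfl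
          intro i _
          simp [i.2]
    rw [hCAeq]
    refine Set.Finite.isClosed_biUnion (Set.toFinite _) ?_
    rintro s ⟨hind, -⟩
    have hinj : Function.Injective (combMap (fun i : s => m i)) := by
      intro g₁ g₂ hg
      have : combMap (fun i : s => m i) (g₁ - g₂) = 0 := by rw [map_sub, hg, sub_self]
      have hz := Fintype.linearIndependent_iff.mp hind (g₁ - g₂) this
      funext i
      have := hz i
      simp only [Pi.sub_apply] at this
      linarith
    obtain ⟨K, hKpos, hK⟩ :=
      (combMap (fun i : s => m i)).exists_antilipschitzWith (LinearMap.ker_eq_bot.mpr hinj)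
    have hcont : UniformContinuous (combMap (fun i : s => m i)) :=
      (LinearMap.toContinuousLinearMap (combMap (fun i : s => m i))).uniformContinuous
    have hemb := hK.isClosedEmbedding hcont
    have horth : IsClosed {g : ↥s → ℝ | ∀ i, 0 ≤ g i} := by
      have : {g : ↥s → ℝ | ∀ i, 0 ≤ g i} = ⋂ i, {g | 0 ≤ g i} := by
        ext g; simp [Set.mem_iInter]
      rw [this]
      exact isClosed_iInter fun i => isClosed_le continuous_const (continuous_apply i)
    exact hemb.isClosedMap _ horth
  -- v belongs to the active cone
  have hvCA : v ∈ CA := by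
    by_contra hvCA
    obtain ⟨φ, u, hlt, hu⟩ := geometric_hahn_banach_closed_point hCAconv hCAclosed hvCA
    have hu0 : 0 < u := by have := hlt 0 hCA0; simpa using this
    have hφm : ∀ i, ⟪m i, p⟫ = d i → φ (m i) ≤ 0 := by
      intro i hact
      by_contra hpos
      push_neg at hpos
      set t : ℝ := (u + 1) / φ (m i) with htdef
      have htpos : 0 < t := div_pos (by linarith) hpos
      have hmem : t • m i ∈ CA := by
        refine ⟨fun j => if j = i then t else 0, fun j => by dsimp only; split <;> simp [htpos.le],
          fun j hj => ?_, ?_⟩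
        · dsimp only at hj
          rcases eq_or_ne j i with rfl | h
          · exact hact
          · simp [h] at hj
        · symm
          simp [ite_smul, Finset.sum_ite_eq']
      have := hlt _ hmem
      rw [map_smul] at this
      simp only [smul_eq_mul, htdef] at this
      rw [div_mul_cancel₀ _ (ne_of_gt hpos)] at this
      linarith
    set y : E := (InnerProductSpace.toDual ℝ E).symm φ with hy
    have hyz : ∀ z, ⟪y, z⟫ = φ z := fun z => InnerProductSpace.toDual_symm_apply
    have hev : ∀ᶠ ε in nhdsWithin (0:ℝ) (Set.Ioi 0), ∀ i, ⟪m i, p + ε • y⟫ ≤ d i := by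
      rw [Filter.eventually_all]
      intro i
      by_cases hact : ⟪m i, p⟫ = d i
      · filter_upwards [self_mem_nhdsWithin] with ε hε
        have hεpos : (0:ℝ) < ε := hε
        have h1 : ⟪m i, p + ε • y⟫ = ⟪m i, p⟫ + ε * ⟪m i, y⟫ := by
          rw [inner_add_right, real_inner_smul_right]
        have h2 : ⟪m i, y⟫ ≤ 0 := by
          rw [real_inner_comm, hyz]
          exact hφm i hact
        rw [h1, hact]
        nlinarith
      · have hlt' : ⟪m i, p⟫ < d i := lt_of_le_of_ne (hpP i) hact
        have hcont : Continuous fun ε : ℝ => ⟪m i, p + ε • y⟫ := by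
          apply Continuous.inner continuous_const
          exact continuous_const.add (continuous_id.smul continuous_const)
        have hopen : IsOpen {ε : ℝ | ⟪m i, p + ε • y⟫ < d i} :=
          isOpen_lt hcont continuous_const
        have hmem0 : (0:ℝ) ∈ {ε : ℝ | ⟪m i, p + ε • y⟫ < d i} := by
          simpa using hlt'
        have := hopen.mem_nhds hmem0
        filter_upwards [nhdsWithin_le_nhds this] with ε hε
        exact le_of_lt hε
    obtain ⟨ε, hεP, hεpos⟩ := (hev.and self_mem_nhdsWithin).exists
    have hmemP : p + ε • y ∈ P := hεP
    have hvar := variational _ hmemP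
    rw [add_sub_cancel_left, real_inner_smul_right] at hvar
    have hvy : 0 < ⟪v, y⟫ := by
      rw [real_inner_comm, hyz]
      linarith [hu0, hu]
    have : (0:ℝ) < ε := hεpos
    nlinarith
  -- now bound ‖v‖
  obtain ⟨lam, hlamnn, hlamact, hlamsum⟩ := hvCA
  obtain ⟨μ, hμnn, hμsupp, hμsum, hμind⟩ :=
    conic_caratheodory m ((Finset.univ.filter (fun i => lam i ≠ 0)).card) lam le_rfl hlamnn
  set s : Finset ι := Finset.univ.filter (fun i => μ i ≠ 0) with hs
  have hmemsupp : ∀ i, μ i ≠ 0 → i ∈ s := by intro i hi; simp [hs, hi]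
  have hfs : ∀ i : ↥s, μ (↑i) ≠ 0 := fun i => (Finset.mem_filter.mp i.2).2
  have hind : LinearIndependent ℝ (fun i : s => m i) :=
    hμind.comp (fun i : ↥s => (⟨↑i, hfs i⟩ : {i // μ i ≠ 0}))
      (fun a b hab => by
              apply Subtype.ext
              have := congrArg Subtype.val hab
              simpa using this)
  have hvsum : v = ∑ i, μ i • m i := by rw [hμsum, ← hlamsum]
  have hμbd : ∀ j, μ j ≤ c s * ‖v‖ := by
    intro j
    have := hcprop s hind μ hmemsupp j
    rw [← hvsum] at this
    exact (le_abs_self _).trans this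
  have hnormsq : ‖v‖ ^ 2 = ∑ i, μ i * ⟪m i, v⟫ := by
    rw [← real_inner_self_eq_norm_sq]
    nth_rewrite 1 [hvsum]
    rw [sum_inner]
    apply Finset.sum_congr rfl
    intro i _
    rw [real_inner_smul_left]
  have hterm : ∀ i, μ i * ⟪m i, v⟫ ≤ (c s * ‖v‖) * max (⟪m i, q⟫ - d i) 0 := by
    intro i
    by_cases hμi : μ i = 0
    · rw [hμi, zero_mul]
      exact mul_nonneg (mul_nonneg (hcpos s).le (norm_nonneg _)) (le_max_right _ _)
    · have hact : ⟪m i, p⟫ = d i := hlamact i (hμsupp i hμi)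
      have h1 : ⟪m i, v⟫ = ⟪m i, q⟫ - d i := by
        rw [hv, inner_sub_right, hact]
      calc μ i * ⟪m i, v⟫ ≤ μ i * max (⟪m i, q⟫ - d i) 0 := by
            apply mul_le_mul_of_nonneg_left _ (hμnn i)
            rw [h1]; exact le_max_left _ _
        _ ≤ (c s * ‖v‖) * max (⟪m i, q⟫ - d i) 0 := by
            apply mul_le_mul_of_nonneg_right (hμbd i) (le_max_right _ _)
  have hfinal : ‖v‖ ^ 2 ≤ (c s * ‖v‖) * ∑ i, max (⟪m i, q⟫ - d i) 0 := by
    rw [hnormsq, Finset.mul_sum]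
    exact Finset.sum_le_sum fun i _ => hterm i
  refine ⟨p, hpP, ?_⟩
  have hvnorm : 0 < ‖v‖ := norm_pos_iff.mpr hv0
  have hvle : ‖v‖ ≤ c s * ∑ i, max (⟪m i, q⟫ - d i) 0 := by
    nlinarith [hfinal]
  calc ‖q - p‖ = ‖v‖ := by rw [hv]
    _ ≤ c s * ∑ i, max (⟪m i, q⟫ - d i) 0 := hvle
    _ ≤ σ * ∑ i, max (⟪m i, q⟫ - d i) 0 :=
        mul_le_mul_of_nonneg_right (hcle s) hmax_nonneg
noncomputable section

section scmid
variable {E₃ : Type*} [NormedAddCommGroup E₃] [InnerProductSpace ℝ E₃] [CompleteSpace E₃]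

lemma midpoint_strong_convex (g : E₃ → ℝ) (αg : ℝ)
    (hgsc : ∀ u v : E₃, g v ≥ g u + ⟪gradient g u, v - u⟫ + αg / 2 * ‖v - u‖ ^ 2)
    (u v : E₃) :
    g ((1/2 : ℝ) • (u + v)) + αg / 8 * ‖v - u‖ ^ 2 ≤ (g u + g v) / 2 := by
  set mpt := (1/2 : ℝ) • (u + v) with hmpt
  have h1 := hgsc mpt u
  have h2 := hgsc mpt v
  have e1 : u - mpt = (1/2 : ℝ) • (u - v) := by rw [hmpt]; module
  have e2 : v - mpt = -((1/2 : ℝ) • (u - v)) := by rw [hmpt]; module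
  rw [e1] at h1
  rw [e2] at h2
  rw [inner_neg_right, norm_neg] at h2
  have hn : ‖(1/2 : ℝ) • (u - v)‖ ^ 2 = (1/2) ^ 2 * ‖u - v‖ ^ 2 := by
    rw [norm_smul]
    simp [mul_pow]
  rw [hn] at h1 h2
  have hnn : ‖v - u‖ = ‖u - v‖ := norm_sub_rev v u
  rw [hnn]
  nlinarith [h1, h2]

end scmid

variable {E₁ E₂ E₃ : Type*}
  [NormedAddCommGroup E₁] [InnerProductSpace ℝ E₁] [FiniteDimensional ℝ E₁]
  [NormedAddCommGroup E₂] [InnerProductSpace ℝ E₂] [FiniteDimensional ℝ E₂]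
  [NormedAddCommGroup E₃] [InnerProductSpace ℝ E₃] [FiniteDimensional ℝ E₃]

/-- first component of a point of `E := E₁ ×₂ E₂` -/
def xPart (q : WithLp 2 (E₁ × E₂)) : E₁ := (WithLp.equiv 2 (E₁ × E₂) q).1

/-- The constraint map `𝒦(x,y) := 𝒜x − y`, as a continuous linear map. -/
def Kmap (A : E₁ →L[ℝ] E₂) : WithLp 2 (E₁ × E₂) →L[ℝ] E₂ :=
  (A.comp (ContinuousLinearMap.fst ℝ E₁ E₂) - ContinuousLinearMap.snd ℝ E₁ E₂).comp
    (WithLp.prodContinuousLinearEquiv 2 ℝ E₁ E₂).toContinuousLinearMap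

/-- The smooth part of the augmented Lagrangian,
`S(q,w) := f(x) + ⟨w, 𝒦q⟩ + (ρ/2)‖𝒦q‖²`. -/
def SAL (f : E₁ → ℝ) (A : E₁ →L[ℝ] E₂) (ρ : ℝ) (q : WithLp 2 (E₁ × E₂)) (w : E₂) : ℝ :=
  f (xPart q) + ⟪w, Kmap A q⟫ + ρ / 2 * ‖Kmap A q‖ ^ 2

/-- objective of Problem (OP): `h(q) := f(x) + R_Q(q)` -/
def hOP (f : E₁ → ℝ) (RQ : WithLp 2 (E₁ × E₂) → EReal) (q : WithLp 2 (E₁ × E₂)) : EReal :=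
  (f (xPart q) : EReal) + RQ q

/-- the augmented Lagrangian `L_ρ(q,w) := f(x) + R_Q(q) + ⟨w,𝒦q⟩ + (ρ/2)‖𝒦q‖²` -/
def AL (f : E₁ → ℝ) (RQ : WithLp 2 (E₁ × E₂) → EReal) (A : E₁ →L[ℝ] E₂) (ρ : ℝ)
    (q : WithLp 2 (E₁ × E₂)) (w : E₂) : EReal :=
  hOP f RQ q + ((⟪w, Kmap A q⟫ + ρ / 2 * ‖Kmap A q‖ ^ 2 : ℝ) : EReal)

/-- saddle point of the augmented Lagrangian -/
def IsSaddle (f : E₁ → ℝ) (RQ : WithLp 2 (E₁ × E₂) → EReal) (A : E₁ →L[ℝ] E₂) (ρ : ℝ)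
    (qs : WithLp 2 (E₁ × E₂)) (ws : E₂) : Prop :=
  ∀ q : WithLp 2 (E₁ × E₂), ∀ w : E₂,
    AL f RQ A ρ qs w ≤ AL f RQ A ρ qs ws ∧ AL f RQ A ρ qs ws ≤ AL f RQ A ρ q ws

/-- set of optimal solutions of Problem (OP) -/
def OptSet (f : E₁ → ℝ) (RQ : WithLp 2 (E₁ × E₂) → EReal) (A : E₁ →L[ℝ] E₂) :
    Set (WithLp 2 (E₁ × E₂)) :=
  {q | Kmap A q = 0 ∧ ∀ p, Kmap A p = 0 → hOP f RQ q ≤ hOP f RQ p}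

/-- the first-component projection, as a continuous linear map -/
def XLm : WithLp 2 (E₁ × E₂) →L[ℝ] E₁ :=
  (ContinuousLinearMap.fst ℝ E₁ E₂).comp
    (WithLp.prodContinuousLinearEquiv 2 ℝ E₁ E₂).toContinuousLinearMap

lemma xPart_eq_XLm (q : WithLp 2 (E₁ × E₂)) : xPart q = XLm q := rfl

set_option maxHeartbeats 1000000 in
theorem graddev (g : E₃ → ℝ) (B : E₁ →L[ℝ] E₃) (f : E₁ → ℝ) (hf : f = fun x => g (B x))
    (αg : ℝ) (hαg : 0 < αg) (hgdiff : Differentiable ℝ g)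
    (hgsc : ∀ u v : E₃, g v ≥ g u + ⟪gradient g u, v - u⟫ + αg / 2 * ‖v - u‖ ^ 2)
    (A : E₁ →L[ℝ] E₂) (ρ : ℝ) (hρ : ρ ≥ αg) (q qs : WithLp 2 (E₁ × E₂)) (w : E₂)
    (σ : ℝ) (hσpos : 0 < σ)
    (hKqs : Kmap A qs = 0)
    (hdist : ‖qs - q‖ ^ 2 ≤ σ * (‖Kmap A q‖ ^ 2 + ‖B.comp XLm q - B.comp XLm qs‖ ^ 2)) :
    ⟪qs - q, gradient (fun q' => SAL f A ρ q' w) q⟫ ≤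
      SAL f A ρ qs w - SAL f A ρ q w - αg / (2 * σ) * ‖qs - q‖ ^ 2 := by
  classical
  set K' : WithLp 2 (E₁ × E₂) →L[ℝ] E₂ := Kmap A with hK'
  set BX : WithLp 2 (E₁ × E₂) →L[ℝ] E₃ := B.comp XLm with hBXdef
  have hBXapp : ∀ z, BX z = B (xPart z) := fun z => rfl
  have hGg : HasGradientAt g (gradient g (BX q)) (BX q) := (hgdiff (BX q)).hasGradientAt
  set G := gradient g (BX q) with hGdef
  have h1 : HasFDerivAt (fun q' : WithLp 2 (E₁ × E₂) => g (BX q'))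
      ((InnerProductSpace.toDual ℝ E₃ G).comp BX) q :=
    (hGg.hasFDerivAt).comp q BX.hasFDerivAt
  have h2 : HasFDerivAt (fun q' : WithLp 2 (E₁ × E₂) => ⟪w, K' q'⟫)
      ((innerSL ℝ w).comp K') q := ((innerSL ℝ w).comp K').hasFDerivAt
  have h3 : HasFDerivAt (fun q' : WithLp 2 (E₁ × E₂) => (⟪K' q', K' q'⟫ : ℝ))
      ((fderivInnerCLM ℝ (K' q, K' q)).comp (K'.prod K')) q := by
    have := (K'.hasFDerivAt (x := q)).inner ℝ (K'.hasFDerivAt (x := q))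
    exact this
  set Dtot : WithLp 2 (E₁ × E₂) →L[ℝ] ℝ :=
    ((InnerProductSpace.toDual ℝ E₃ G).comp BX + (innerSL ℝ w).comp K') +
      (ρ / 2) • ((fderivInnerCLM ℝ (K' q, K' q)).comp (K'.prod K')) with hDtotdef
  have hfun : (fun q' => SAL f A ρ q' w) =
      fun q' => g (BX q') + ⟪w, K' q'⟫ + ρ / 2 * (⟪K' q', K' q'⟫ : ℝ) := by
    funext q'
    rw [SAL, hf, real_inner_self_eq_norm_sq]
    rfl
  have hS : HasFDerivAt (fun q' => SAL f A ρ q' w) Dtot q := by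
    rw [hfun, hDtotdef]
    exact (h1.add h2).add (h3.const_mul (ρ / 2))
  have hgrad : gradient (fun q' => SAL f A ρ q' w) q =
      (InnerProductSpace.toDual ℝ (WithLp 2 (E₁ × E₂))).symm Dtot :=
    (hS.hasGradientAt).gradient
  have hlhs : ⟪qs - q, gradient (fun q' => SAL f A ρ q' w) q⟫ = Dtot (qs - q) := by
    rw [hgrad, real_inner_comm, InnerProductSpace.toDual_symm_apply]
  have hDtotval : Dtot (qs - q) = ⟪G, BX qs - BX q⟫ + ⟪w, K' qs - K' q⟫
      + ρ / 2 * (⟪K' q, K' qs - K' q⟫ + ⟪K' qs - K' q, K' q⟫) := by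
    rw [hDtotdef]
    simp only [ContinuousLinearMap.add_apply, ContinuousLinearMap.coe_smul',
      ContinuousLinearMap.coe_comp', Function.comp_apply, Pi.smul_apply,
      ContinuousLinearMap.prod_apply, fderivInnerCLM_apply, map_sub,
      InnerProductSpace.toDual_apply_apply, innerSL_apply_apply, smul_eq_mul,
      inner_sub_left, inner_sub_right]
    ring
  have hSALqs : SAL f A ρ qs w = g (BX qs) := by
    rw [SAL, hf]
    have h0 : Kmap A qs = 0 := hKqs
    rw [h0]
    simp [hBXapp]
  have hSALq : SAL f A ρ q w = g (BX q) + ⟪w, K' q⟫ + ρ / 2 * ‖K' q‖ ^ 2 := by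
    rw [SAL, hf]
    rfl
  rw [hlhs, hDtotval, hSALqs, hSALq, hKqs]
  have hsc := hgsc (BX q) (BX qs)
  rw [← hGdef] at hsc
  have e1 : ⟪w, (0:E₂) - K' q⟫ = -⟪w, K' q⟫ := by rw [zero_sub, inner_neg_right]
  have e2 : (⟪K' q, (0:E₂) - K' q⟫ : ℝ) = -‖K' q‖ ^ 2 := by
    rw [zero_sub, inner_neg_right, real_inner_self_eq_norm_sq]
  have e3 : (⟪(0:E₂) - K' q, K' q⟫ : ℝ) = -‖K' q‖ ^ 2 := by
    rw [zero_sub, inner_neg_left, real_inner_self_eq_norm_sq]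
  rw [e1, e2, e3]
  have hnf2 : ‖BX qs - BX q‖ ^ 2 = ‖BX q - BX qs‖ ^ 2 := by rw [norm_sub_rev]
  have hσsig : αg / (2 * σ) * ‖qs - q‖ ^ 2 ≤
      αg / 2 * (‖K' q‖ ^ 2 + ‖BX q - BX qs‖ ^ 2) := by
    have hcoef : (0:ℝ) ≤ αg / (2 * σ) := by positivity
    have h' := mul_le_mul_of_nonneg_left hdist hcoef
    calc αg / (2 * σ) * ‖qs - q‖ ^ 2
        ≤ αg / (2 * σ) * (σ * (‖K' q‖ ^ 2 + ‖BX q - BX qs‖ ^ 2)) := h'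
      _ = αg / 2 * (‖K' q‖ ^ 2 + ‖BX q - BX qs‖ ^ 2) := by
          field_simp
  have hKnn : (0:ℝ) ≤ ‖K' q‖ ^ 2 := sq_nonneg _
  nlinarith [hsc, hσsig, hnf2, hKnn, mul_le_mul_of_nonneg_right hρ hKnn]


private lemma coeff_helper (s d2 d3 x y : ℝ) (hs : 0 ≤ s) (hd2 : 0 ≤ d2) (hd3 : 0 ≤ d3)
    (hx : 0 ≤ x) (hy : 0 ≤ y) :
    s * (d2 * x + d3 * y) ≤ (s * (d2 + d3 + 1)) * (x + y) := by
  have h1 : d2 * x + d3 * y ≤ (d2 + d3 + 1) * (x + y) := by nlinarith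
  calc s * (d2 * x + d3 * y) ≤ s * ((d2 + d3 + 1) * (x + y)) := by
        exact mul_le_mul_of_nonneg_left h1 hs
    _ = (s * (d2 + d3 + 1)) * (x + y) := by ring

private lemma dist_helper (n x y m : ℝ) (hn : 0 ≤ n) (hx : 0 ≤ x) (hy : 0 ≤ y)
    (h4 : n ≤ m * (x + y)) : n ^ 2 ≤ (2 * m ^ 2 + 1) * (x ^ 2 + y ^ 2) := by
  have h6 : n ^ 2 ≤ (m * (x + y)) ^ 2 := by nlinarith
  nlinarith [h6, mul_nonneg (sq_nonneg m) (sq_nonneg (x - y)), sq_nonneg x, sq_nonneg y]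

set_option maxHeartbeats 1600000 in
/-- under the polytope/strongly-convex-composite assumptions and `ρ ≥ α_g`,
Problem (OP) satisfies the primal quadratic gap property with parameter `α_S = α_g/σ`
for some `σ > 0`. -/
theorem pqg_of_polytope (g : E₃ → ℝ) (B : E₁ →L[ℝ] E₃) (f : E₁ → ℝ) (hf : f = fun x => g (B x))
    (αg : ℝ) (hαg : 0 < αg) (hgdiff : Differentiable ℝ g)
    (hgsc : ∀ u v : E₃, g v ≥ g u + ⟪gradient g u, v - u⟫ + αg / 2 * ‖v - u‖ ^ 2)
    (p : ℕ) (C : WithLp 2 (E₁ × E₂) →ₗ[ℝ] (Fin p → ℝ)) (b : Fin p → ℝ)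
    (F : Set (WithLp 2 (E₁ × E₂))) (hF : F = {q | ∀ i, C q i ≤ b i})
    (hFne : F.Nonempty) (hFcpt : IsCompact F)
    (RQ : WithLp 2 (E₁ × E₂) → EReal)
    (hRQ : ∀ q, (q ∈ F → RQ q = 0) ∧ (q ∉ F → RQ q = ⊤))
    (A : E₁ →L[ℝ] E₂) (ρ : ℝ) (hρ : ρ ≥ αg)
    (hsaddle : ∃ qs ws, IsSaddle f RQ A ρ qs ws) :
    ∃ σ : ℝ, 0 < σ ∧
      ∀ q ∈ F, ∀ qs ∈ OptSet f RQ A,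
        (∀ pt ∈ OptSet f RQ A, ‖q - qs‖ ≤ ‖q - pt‖) →  -- `qs` is the nearest optimal solution
        ∀ w : E₂,
          ⟪qs - q, gradient (fun q' => SAL f A ρ q' w) q⟫ ≤
            SAL f A ρ qs w - SAL f A ρ q w - αg / (2 * σ) * ‖qs - q‖ ^ 2 := by
  classical
  obtain ⟨q₀, w₀, hsad⟩ := hsaddle
  obtain ⟨qF, hqF⟩ := hFne
  have hRQF : ∀ q ∈ F, RQ q = 0 := fun q hq => (hRQ q).1 hq
  have hRQnF : ∀ q, q ∉ F → RQ q = ⊤ := fun q hq => (hRQ q).2 hq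
  have hhOP_mem : ∀ q ∈ F, hOP f RQ q = ((f (xPart q) : ℝ) : EReal) := by
    intro q hq; rw [hOP, hRQF q hq, add_zero]
  have hhOP_not : ∀ q, q ∉ F → hOP f RQ q = ⊤ := by
    intro q hq; rw [hOP, hRQnF q hq, EReal.coe_add_top]
  have hAL_mem : ∀ q ∈ F, ∀ w, AL f RQ A ρ q w =
      ((f (xPart q) + (⟪w, Kmap A q⟫ + ρ / 2 * ‖Kmap A q‖ ^ 2) : ℝ) : EReal) := by
    intro q hq w
    rw [AL, hhOP_mem q hq, ← EReal.coe_add]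
  have hAL_not : ∀ q, q ∉ F → ∀ w, AL f RQ A ρ q w = ⊤ := by
    intro q hq w
    rw [AL, hhOP_not q hq, EReal.top_add_coe]
  -- the saddle point is feasible
  have hq₀F : q₀ ∈ F := by
    by_contra hq₀F
    have h1 := (hsad qF w₀).2
    rw [hAL_not q₀ hq₀F, hAL_mem qF hqF] at h1
    exact absurd (top_le_iff.mp h1) (EReal.coe_ne_top _)
  -- the saddle point satisfies the constraint
  have hKq₀ : Kmap A q₀ = 0 := by
    by_contra hK
    have hKpos : (0:ℝ) < ‖Kmap A q₀‖ ^ 2 := by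
      have := norm_pos_iff.mpr hK
      positivity
    set w₁ := w₀ + (1 / ‖Kmap A q₀‖ ^ 2) • Kmap A q₀ with hw₁
    have h1 := (hsad q₀ w₁).1
    rw [hAL_mem q₀ hq₀F, hAL_mem q₀ hq₀F, EReal.coe_le_coe_iff] at h1
    have hinner : ⟪w₁, Kmap A q₀⟫ = ⟪w₀, Kmap A q₀⟫ + 1 := by
      rw [hw₁, inner_add_left, real_inner_smul_left, real_inner_self_eq_norm_sq]
      field_simp
    rw [hinner] at h1
    linarith
  -- the saddle point is optimal
  have hq₀opt : q₀ ∈ OptSet f RQ A := by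
    refine ⟨hKq₀, fun pt hpt => ?_⟩
    have h2 := (hsad pt w₀).2
    have e1 : AL f RQ A ρ q₀ w₀ = hOP f RQ q₀ := by
      rw [AL, hKq₀]; simp
    have e2 : AL f RQ A ρ pt w₀ = hOP f RQ pt := by
      rw [AL, hpt]; simp
    rwa [e1, e2] at h2
  -- every optimal point is feasible
  have hOptF : ∀ qs ∈ OptSet f RQ A, qs ∈ F := by
    rintro qs ⟨hK, hle⟩
    by_contra h
    have := hle q₀ hKq₀
    rw [hhOP_not qs h, hhOP_mem q₀ hq₀F] at this
    exact absurd (top_le_iff.mp this) (EReal.coe_ne_top _)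
  -- F is closed under midpoints
  have hFmid : ∀ p₁ ∈ F, ∀ p₂ ∈ F, (1/2 : ℝ) • (p₁ + p₂) ∈ F := by
    intro p₁ hp₁ p₂ hp₂
    rw [hF] at hp₁ hp₂ ⊢
    intro i
    rw [map_smul, map_add]
    have := hp₁ i
    have := hp₂ i
    simp only [Pi.smul_apply, Pi.add_apply, smul_eq_mul]
    linarith
  -- B ∘ xPart is constant on the optimal set
  have hBconst : ∀ qs ∈ OptSet f RQ A, B (xPart qs) = B (xPart q₀) := by
    rintro qs hqs
    obtain ⟨hK, hle⟩ := hqs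
    have hqsF : qs ∈ F := hOptF qs ⟨hK, hle⟩
    set mpt := (1/2 : ℝ) • (qs + q₀) with hmpt
    have hmptF : mpt ∈ F := hFmid qs hqsF q₀ hq₀F
    have hKm : Kmap A mpt = 0 := by
      rw [hmpt, map_smul, map_add, hK, hKq₀]; simp
    have h1 := hle mpt hKm
    have h2 := hq₀opt.2 mpt hKm
    rw [hhOP_mem qs hqsF, hhOP_mem mpt hmptF, EReal.coe_le_coe_iff] at h1
    rw [hhOP_mem q₀ hq₀F, hhOP_mem mpt hmptF, EReal.coe_le_coe_iff] at h2
    have hxm : xPart mpt = (1/2 : ℝ) • (xPart qs + xPart q₀) := by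
      rw [xPart_eq_XLm, xPart_eq_XLm, xPart_eq_XLm, hmpt, map_smul, map_add]
    have hBm : B (xPart mpt) = (1/2 : ℝ) • (B (xPart qs) + B (xPart q₀)) := by
      rw [hxm, map_smul, map_add]
    have hmid := midpoint_strong_convex g αg hgsc (B (xPart qs)) (B (xPart q₀))
    rw [hf] at h1 h2
    simp only at h1 h2
    rw [hBm] at h1 h2
    have hzero : ‖B (xPart q₀) - B (xPart qs)‖ ^ 2 ≤ 0 := by nlinarith
    have : ‖B (xPart q₀) - B (xPart qs)‖ = 0 := by
      have h0 := sq_nonneg ‖B (xPart q₀) - B (xPart qs)‖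
      have : ‖B (xPart q₀) - B (xPart qs)‖ ^ 2 = 0 := le_antisymm hzero h0
      exact pow_eq_zero_iff (n := 2) (by norm_num) |>.mp this
    have := norm_eq_zero.mp this
    have := sub_eq_zero.mp this
    exact this.symm
  -- characterization of the optimal set as a polyhedron
  have hOptChar : ∀ z, z ∈ OptSet f RQ A ↔
      ((∀ i, C z i ≤ b i) ∧ Kmap A z = 0 ∧ B (xPart z) = B (xPart q₀)) := by
    intro z
    constructor
    · intro hz
      have hzF := hOptF z hz
      refine ⟨by rw [hF] at hzF; exact hzF, hz.1, hBconst z hz⟩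
    · rintro ⟨hzF', hzK, hzB⟩
      have hzF : z ∈ F := by rw [hF]; exact hzF'
      refine ⟨hzK, fun pt hpt => ?_⟩
      have : hOP f RQ z = hOP f RQ q₀ := by
        rw [hhOP_mem z hzF, hhOP_mem q₀ hq₀F, hf]
        simp only
        rw [hzB]
      rw [this]
      exact hq₀opt.2 pt hpt
  -- ### Hoffman error bound for the optimal set ###
  set K' : WithLp 2 (E₁ × E₂) →L[ℝ] E₂ := Kmap A with hK'
  set BX : WithLp 2 (E₁ × E₂) →L[ℝ] E₃ := B.comp XLm with hBXdef
  have hBXapp : ∀ z, BX z = B (xPart z) := fun z => rfl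
  set t₀ : E₃ := B (xPart q₀) with ht₀
  set d₂ := Module.finrank ℝ E₂ with hd₂
  set d₃ := Module.finrank ℝ E₃ with hd₃
  set b₂ := stdOrthonormalBasis ℝ E₂ with hb₂
  set b₃ := stdOrthonormalBasis ℝ E₃ with hb₃
  set mvec : (Fin p ⊕ (Fin d₂ × Bool ⊕ Fin d₃ × Bool)) → WithLp 2 (E₁ × E₂) :=
    Sum.elim
      (fun i => (InnerProductSpace.toDual ℝ (WithLp 2 (E₁ × E₂))).symm
        (LinearMap.toContinuousLinearMap ((LinearMap.proj i).comp C)))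
      (Sum.elim
        (fun js => (if js.2 then (1:ℝ) else -1) • (ContinuousLinearMap.adjoint K') (b₂ js.1))
        (fun js => (if js.2 then (1:ℝ) else -1) • (ContinuousLinearMap.adjoint BX) (b₃ js.1)))
    with hmvec
  set dvec : (Fin p ⊕ (Fin d₂ × Bool ⊕ Fin d₃ × Bool)) → ℝ :=
    Sum.elim b (Sum.elim (fun _ => 0)
      (fun js => (if js.2 then (1:ℝ) else -1) * ⟪b₃ js.1, t₀⟫)) with hdvec
  have hm1 : ∀ i z, ⟪mvec (Sum.inl i), z⟫ = C z i := fun i z =>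
    InnerProductSpace.toDual_symm_apply
  have hm2 : ∀ js z, ⟪mvec (Sum.inr (Sum.inl js)), z⟫ =
      (if js.2 then (1:ℝ) else -1) * ⟪b₂ js.1, K' z⟫ := by
    intro js z
    rw [hmvec]
    simp only [Sum.elim_inr, Sum.elim_inl]
    rw [real_inner_smul_left, ContinuousLinearMap.adjoint_inner_left]
  have hm3 : ∀ js z, ⟪mvec (Sum.inr (Sum.inr js)), z⟫ =
      (if js.2 then (1:ℝ) else -1) * ⟪b₃ js.1, BX z⟫ := by
    intro js z
    rw [hmvec]
    simp only [Sum.elim_inr]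
    rw [real_inner_smul_left, ContinuousLinearMap.adjoint_inner_left]
  have hbasis₂ : ∀ u : E₂, (∀ j, ⟪b₂ j, u⟫ = 0) → u = 0 := by
    intro u h
    have : b₂.repr u = 0 := by
      ext j
      rw [b₂.repr_apply_apply]
      simpa using h j
    simpa using congrArg b₂.repr.symm this
  have hbasis₃ : ∀ u : E₃, (∀ j, ⟪b₃ j, u⟫ = 0) → u = 0 := by
    intro u h
    have : b₃.repr u = 0 := by
      ext j
      rw [b₃.repr_apply_apply]
      simpa using h j
    simpa using congrArg b₃.repr.symm this
  have hsat : ∀ z, (∀ i, ⟪mvec i, z⟫ ≤ dvec i) ↔ z ∈ OptSet f RQ A := by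
    intro z
    rw [hOptChar z]
    constructor
    · intro h
      refine ⟨fun i => by have := h (Sum.inl i); rwa [hm1] at this, ?_, ?_⟩
      · apply hbasis₂
        intro j
        have h1 := h (Sum.inr (Sum.inl (j, true)))
        have h2 := h (Sum.inr (Sum.inl (j, false)))
        rw [hm2] at h1 h2
        norm_num [hdvec] at h1 h2
        linarith
      · have : BX z - t₀ = 0 := by
          apply hbasis₃
          intro j
          have h1 := h (Sum.inr (Sum.inr (j, true)))
          have h2 := h (Sum.inr (Sum.inr (j, false)))
          rw [hm3] at h1 h2
          norm_num [hdvec] at h1 h2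
          rw [inner_sub_right]
          linarith
        have := sub_eq_zero.mp this
        rw [← hBXapp z, this, ht₀]
    · rintro ⟨hC, hKz, hBz⟩ i
      rcases i with i | (js | js)
      · rw [hm1]
        exact hC i
      · rw [hm2]
        have : K' z = 0 := hKz
        rw [this]
        simp [hdvec]
      · rw [hm3]
        have : BX z = t₀ := by rw [hBXapp z, hBz, ht₀]
        rw [this]
        simp [hdvec]
  obtain ⟨σ₀, hσ₀pos, hhoff⟩ := hoffman_bound mvec dvec ⟨q₀, (hsat q₀).mpr hq₀opt⟩
  -- violation bound for feasible points
  have hnorm_b₂ : ∀ j, ‖b₂ j‖ = 1 := fun j => b₂.orthonormal.1 j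
  have hnorm_b₃ : ∀ j, ‖b₃ j‖ = 1 := fun j => b₃.orthonormal.1 j
  have hviol : ∀ z ∈ F, ∑ i, max (⟪mvec i, z⟫ - dvec i) 0 ≤
      (2 * d₂ : ℝ) * ‖K' z‖ + (2 * d₃ : ℝ) * ‖BX z - t₀‖ := by
    intro z hz
    rw [Fintype.sum_sum_type, Fintype.sum_sum_type]
    have hC0 : ∑ i : Fin p, max (⟪mvec (Sum.inl i), z⟫ - dvec (Sum.inl i)) 0 = 0 := by
      apply Finset.sum_eq_zero
      intro i _
      rw [hm1]
      have hle : C z i ≤ b i := by rw [hF] at hz; exact hz i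
      have hd : dvec (Sum.inl i) = b i := rfl
      rw [hd, max_eq_right (by linarith)]
    have hK2 : ∀ js : Fin d₂ × Bool,
        max (⟪mvec (Sum.inr (Sum.inl js)), z⟫ - dvec (Sum.inr (Sum.inl js))) 0 ≤ ‖K' z‖ := by
      rintro ⟨j, sg⟩
      rw [hm2]
      have hd : dvec (Sum.inr (Sum.inl (j, sg))) = 0 := rfl
      rw [hd, sub_zero]
      apply max_le _ (norm_nonneg _)
      have habs : |⟪b₂ j, K' z⟫| ≤ ‖K' z‖ := by
        have := abs_real_inner_le_norm (b₂ j) (K' z)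
        rwa [hnorm_b₂ j, one_mul] at this
      have hle := le_abs_self ⟪b₂ j, K' z⟫
      have hge := neg_abs_le ⟪b₂ j, K' z⟫
      cases sg
      · norm_num
        linarith
      · norm_num
        linarith
    have hK3 : ∀ js : Fin d₃ × Bool,
        max (⟪mvec (Sum.inr (Sum.inr js)), z⟫ - dvec (Sum.inr (Sum.inr js))) 0 ≤
          ‖BX z - t₀‖ := by
      rintro ⟨j, sg⟩
      rw [hm3]
      have hd : dvec (Sum.inr (Sum.inr (j, sg))) = (if sg then (1:ℝ) else -1) * ⟪b₃ j, t₀⟫ := rfl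
      rw [hd]
      apply max_le _ (norm_nonneg _)
      have heq : (if sg then (1:ℝ) else -1) * ⟪b₃ j, BX z⟫ -
          (if sg then (1:ℝ) else -1) * ⟪b₃ j, t₀⟫ =
          (if sg then (1:ℝ) else -1) * ⟪b₃ j, BX z - t₀⟫ := by
        rw [inner_sub_right]
        ring
      rw [heq]
      have habs : |⟪b₃ j, BX z - t₀⟫| ≤ ‖BX z - t₀‖ := by
        have := abs_real_inner_le_norm (b₃ j) (BX z - t₀)
        rwa [hnorm_b₃ j, one_mul] at this
      have hle := le_abs_self ⟪b₃ j, BX z - t₀⟫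
      have hge := neg_abs_le ⟪b₃ j, BX z - t₀⟫
      cases sg
      · norm_num
        linarith
      · norm_num
        linarith
    have hsum2 : ∑ js : Fin d₂ × Bool,
        max (⟪mvec (Sum.inr (Sum.inl js)), z⟫ - dvec (Sum.inr (Sum.inl js))) 0 ≤
        (2 * d₂ : ℝ) * ‖K' z‖ := by
      calc ∑ js : Fin d₂ × Bool, max (⟪mvec (Sum.inr (Sum.inl js)), z⟫ -
            dvec (Sum.inr (Sum.inl js))) 0
          ≤ ∑ _js : Fin d₂ × Bool, ‖K' z‖ := Finset.sum_le_sum fun js _ => hK2 js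
        _ = (2 * d₂ : ℝ) * ‖K' z‖ := by
            rw [Finset.sum_const, Finset.card_univ, nsmul_eq_mul, Fintype.card_prod,
              Fintype.card_fin, Fintype.card_bool]
            push_cast
            ring
    have hsum3 : ∑ js : Fin d₃ × Bool,
        max (⟪mvec (Sum.inr (Sum.inr js)), z⟫ - dvec (Sum.inr (Sum.inr js))) 0 ≤
        (2 * d₃ : ℝ) * ‖BX z - t₀‖ := by
      calc ∑ js : Fin d₃ × Bool, max (⟪mvec (Sum.inr (Sum.inr js)), z⟫ -
            dvec (Sum.inr (Sum.inr js))) 0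
          ≤ ∑ _js : Fin d₃ × Bool, ‖BX z - t₀‖ := Finset.sum_le_sum fun js _ => hK3 js
        _ = (2 * d₃ : ℝ) * ‖BX z - t₀‖ := by
            rw [Finset.sum_const, Finset.card_univ, nsmul_eq_mul, Fintype.card_prod,
              Fintype.card_fin, Fintype.card_bool]
            push_cast
            ring
    rw [hC0, zero_add]
    linarith
  -- the final constant
  set M : ℝ := σ₀ * ((2 * d₂ : ℝ) + (2 * d₃ : ℝ) + 1) with hM
  have hMpos : 0 < M := by
    apply mul_pos hσ₀pos
    positivity
  set σ : ℝ := 2 * M ^ 2 + 1 with hσdef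
  have hσpos : 0 < σ := by positivity
  refine ⟨σ, hσpos, ?_⟩
  intro q hq qs hqs hnear w
  have hKqs : K' qs = 0 := hqs.1
  have hBXqs : BX qs = t₀ := by rw [hBXapp qs, hBconst qs hqs, ht₀]
  -- distance bound
  have hdist : ‖qs - q‖ ^ 2 ≤ σ * (‖K' q‖ ^ 2 + ‖BX q - BX qs‖ ^ 2) := by
    obtain ⟨pr, hprsat, hprle⟩ := hhoff q
    have hprOpt : pr ∈ OptSet f RQ A := (hsat pr).mp hprsat
    have h1 : ‖q - qs‖ ≤ ‖q - pr‖ := hnear pr hprOpt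
    have h2 := hviol q hq
    set X := ‖K' q‖ with hX
    set Y := ‖BX q - BX qs‖ with hY
    have hYt : ‖BX q - t₀‖ = Y := by rw [hY, hBXqs]
    have h3 : ‖q - pr‖ ≤ σ₀ * ((2 * d₂ : ℝ) * X + (2 * d₃ : ℝ) * Y) := by
      calc ‖q - pr‖ ≤ σ₀ * ∑ i, max (⟪mvec i, q⟫ - dvec i) 0 := hprle
        _ ≤ σ₀ * ((2 * d₂ : ℝ) * X + (2 * d₃ : ℝ) * Y) := by
            apply mul_le_mul_of_nonneg_left _ hσ₀pos.le
            rw [← hYt]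
            exact h2
    have hXnn : 0 ≤ X := norm_nonneg _
    have hYnn : 0 ≤ Y := norm_nonneg _
    have hd2nn : (0:ℝ) ≤ 2 * (d₂:ℝ) := by positivity
    have hd3nn : (0:ℝ) ≤ 2 * (d₃:ℝ) := by positivity
    have h4 : ‖q - qs‖ ≤ M * (X + Y) := by
      refine h1.trans (h3.trans ?_)
      rw [hM]
      exact coeff_helper σ₀ _ _ X Y hσ₀pos.le hd2nn hd3nn hXnn hYnn
    have h5 : ‖qs - q‖ = ‖q - qs‖ := norm_sub_rev qs q
    rw [h5, hσdef]
    exact dist_helper _ X Y M (norm_nonneg _) hXnn hYnn h4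
  rw [hK'] at hKqs
  rw [hBXdef, hK'] at hdist
  exact graddev g B f hf αg hαg hgdiff hgsc A ρ hρ q qs w σ hσpos hKqs hdist
end
end

section
/- Assume Problem (OP) satisfies the primal quadratic gap property with parameter α_S > 0, that L_ρ has a saddle point with common saddle value L_ρ*, and let β_S be the smoothness parameter of S(·,w). Let λ ≥ 1, let μ > 0 satisfy 2μ(‖𝒜‖+1)² ≤ (√(λα_S² + λ²β_S²) − λβ_S)/(2λ), and set η := α_S/(2λ(β_S + 2μ(‖𝒜‖+1)²)) ∈ (0,1]. Let (q_t, w_t) be generated by: q₀ ∈ dom R_Q, w₀ ∈ E₂; for each t, v_t satisfies Φ₁(v_t) ≤ Φ_λ(q*) for all q* ∈ 𝒫* (the weak proximal oracle condition at (q_t,w_t)); q_{t+1} = (1−η)q_t + η v_t; w_{t+1} = w_t + μ𝒦q_{t+1}. Define d_t := L_ρ(q_t,w_t) − L_ρ*. Then for every t ≥ 1, d_{t+1} ≤ (1−η)ᵗ d₁. -/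
set_option maxHeartbeats 1000000


open scoped RealInnerProductSpace
noncomputable section

variable {E₁ E₂ : Type*}
  [NormedAddCommGroup E₁] [InnerProductSpace ℝ E₁] [FiniteDimensional ℝ E₁]
  [NormedAddCommGroup E₂] [InnerProductSpace ℝ E₂] [FiniteDimensional ℝ E₂]

/-- second component of a point of `E := E₁ ×₂ E₂` -/
def yPart (q : WithLp 2 (E₁ × E₂)) : E₂ := (WithLp.equiv 2 (E₁ × E₂) q).2

/-- the gradient `∇_q S(q,w)` -/
def gradS (f : E₁ → ℝ) (A : E₁ →L[ℝ] E₂) (ρ : ℝ) (q : WithLp 2 (E₁ × E₂)) (w : E₂) :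
    WithLp 2 (E₁ × E₂) :=
  gradient (fun q' => SAL f A ρ q' w) q

/-- a proper function with values in `(-∞, +∞]` -/
def ProperFun {V : Type*} (R : V → EReal) : Prop :=
  (∃ x, R x ≠ ⊤) ∧ ∀ x, R x ≠ ⊥

/-- convexity for `EReal`-valued functions -/
def ERConvexOn {V : Type*} [AddCommGroup V] [Module ℝ V] (R : V → EReal) : Prop :=
  ∀ x y : V, ∀ a b : ℝ, 0 ≤ a → 0 ≤ b → a + b = 1 →
    R (a • x + b • y) ≤ (a : EReal) * R x + (b : EReal) * R y

-- descent lemma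
lemma aux_descent {F : Type*} [NormedAddCommGroup F] [InnerProductSpace ℝ F] [CompleteSpace F]
    (G : F → ℝ) (G' : F → F) (hG : ∀ z, HasGradientAt G (G' z) z)
    (L : ℝ) (hlip : ∀ z₁ z₂ : F, ‖G' z₁ - G' z₂‖ ≤ L * ‖z₁ - z₂‖) (x y : F) :
    G y ≤ G x + ⟪G' x, y - x⟫ + L / 2 * ‖y - x‖ ^ 2 := by
  set d := y - x with hd
  have hline : ∀ t : ℝ, HasDerivAt (fun s : ℝ => x + s • d) d t := fun t => by
    simpa using ((hasDerivAt_id t).smul_const d).const_add x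
  have hphi : ∀ t : ℝ, HasDerivAt (fun s => G (x + s • d)) ⟪G' (x + t • d), d⟫ t := by
    intro t
    have h1 := (hG (x + t • d)).hasFDerivAt.comp_hasDerivAt t (hline t)
    simpa [InnerProductSpace.toDual_apply_apply, Function.comp_def] using h1
  have hG'c : Continuous G' := by
    have : LipschitzWith (Real.toNNReal L) G' := by
      apply LipschitzWith.of_dist_le_mul
      intro a b
      rw [dist_eq_norm, dist_eq_norm]
      exact le_trans (hlip a b) (by
        have : L ≤ (Real.toNNReal L : ℝ) := Real.le_coe_toNNReal L
        have h0 : (0:ℝ) ≤ ‖a - b‖ := norm_nonneg _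
        nlinarith)
    exact this.continuous
  have hcont : Continuous fun t : ℝ => (⟪G' (x + t • d), d⟫ : ℝ) := by
    apply Continuous.inner
    · exact hG'c.comp (by continuity)
    · exact continuous_const
  have key : ∫ t in (0:ℝ)..1, (⟪G' (x + t • d), d⟫ : ℝ) = G (x + (1:ℝ) • d) - G (x + (0:ℝ) • d) :=
    intervalIntegral.integral_eq_sub_of_hasDerivAt (fun t _ => hphi t)
      (hcont.intervalIntegrable 0 1)
  have hbound : ∀ t ∈ Set.Icc (0:ℝ) 1,
      (⟪G' (x + t • d), d⟫ : ℝ) ≤ ⟪G' x, d⟫ + (L * ‖d‖ ^ 2) * t := by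
    intro t ht
    have h1 : (⟪G' (x + t • d) - G' x, d⟫ : ℝ) ≤ L * t * ‖d‖ ^ 2 := by
      calc (⟪G' (x + t • d) - G' x, d⟫ : ℝ) ≤ ‖G' (x + t • d) - G' x‖ * ‖d‖ :=
            real_inner_le_norm _ _
        _ ≤ (L * ‖(x + t • d) - x‖) * ‖d‖ :=
            mul_le_mul_of_nonneg_right (hlip _ _) (norm_nonneg _)
        _ = L * t * ‖d‖ ^ 2 := by
            rw [add_sub_cancel_left, norm_smul, Real.norm_of_nonneg ht.1]; ring
    have h2 : (⟪G' (x + t • d) - G' x, d⟫ : ℝ) = ⟪G' (x + t • d), d⟫ - ⟪G' x, d⟫ :=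
      inner_sub_left _ _ _
    nlinarith [h1, h2]
  have hInt : ∫ t in (0:ℝ)..1, (⟪G' (x + t • d), d⟫ : ℝ) ≤
      ∫ t in (0:ℝ)..1, (⟪G' x, d⟫ + (L * ‖d‖ ^ 2) * t) := by
    apply intervalIntegral.integral_mono_on zero_le_one (hcont.intervalIntegrable 0 1)
      (((by fun_prop : Continuous fun t : ℝ => (⟪G' x, d⟫ : ℝ) + (L * ‖d‖ ^ 2) * t)).intervalIntegrable 0 1)
    exact hbound
  have hIntval : ∫ t in (0:ℝ)..1, ((⟪G' x, d⟫ : ℝ) + (L * ‖d‖ ^ 2) * t) =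
      ⟪G' x, d⟫ + L / 2 * ‖d‖ ^ 2 := by
    rw [intervalIntegral.integral_add (intervalIntegrable_const)
      (((by fun_prop : Continuous fun t : ℝ => (L * ‖d‖ ^ 2) * t)).intervalIntegrable 0 1),
      intervalIntegral.integral_const_mul, integral_id, intervalIntegral.integral_const]
    simp
    ring
  have hxy : x + (1:ℝ) • d = y := by rw [hd]; simp
  have hx0 : x + (0:ℝ) • d = x := by simp
  rw [hxy, hx0] at key
  nlinarith [key, hInt, hIntval]

lemma aux_grad_add {F : Type*} [NormedAddCommGroup F] [InnerProductSpace ℝ F] [CompleteSpace F]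
    {f g : F → ℝ} {f' g' x : F} (hf : HasGradientAt f f' x) (hg : HasGradientAt g g' x) :
    HasGradientAt (fun z => f z + g z) (f' + g') x := by
  rw [hasGradientAt_iff_hasFDerivAt] at *
  rw [map_add]
  exact hf.add hg

lemma aux_grad_normsq {F G : Type*} [NormedAddCommGroup F] [InnerProductSpace ℝ F]
    [NormedAddCommGroup G] [InnerProductSpace ℝ G] [CompleteSpace F] [CompleteSpace G]
    (K : F →L[ℝ] G) (c : ℝ) (q : F) :
    HasGradientAt (fun p => c * ‖K p‖ ^ 2) ((2 * c) • (ContinuousLinearMap.adjoint K) (K q)) q := by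
  rw [hasGradientAt_iff_hasFDerivAt]
  have h0 : HasFDerivAt (fun p => (⟪K p, K p⟫ : ℝ))
      ((fderivInnerCLM ℝ (K q, K q)).comp ((K : F →L[ℝ] G).prod K)) q :=
    (K.hasFDerivAt.inner ℝ K.hasFDerivAt)
  have h1 := h0.const_mul c
  have heq : (fun p => c * ‖K p‖ ^ 2) = fun p => c * (⟪K p, K p⟫ : ℝ) := by
    funext p; rw [real_inner_self_eq_norm_sq]
  rw [heq]
  convert h1 using 1
  · rfl
  ext v
  simp [InnerProductSpace.toDual_apply_apply, fderivInnerCLM_apply, inner_smul_left,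
    ContinuousLinearMap.adjoint_inner_left, real_inner_comm]
  ring

lemma aux_scalar_key (αS lam βS μ nK N η k Dp : ℝ)
    (hα : 0 < αS) (hlam : 1 ≤ lam) (hβS : 0 ≤ βS) (hμ : 0 < μ)
    (hnK : 0 ≤ nK) (hnKN : nK ≤ N) (hN : 0 < N)
    (hcond : 2 * μ * N ^ 2 ≤ (Real.sqrt (lam * αS ^ 2 + lam ^ 2 * βS ^ 2) - lam * βS) / (2 * lam))
    (hη : η = αS / (2 * lam * (βS + 2 * μ * N ^ 2)))
    (hk : 0 ≤ k) (hkD : k ≤ nK * Dp) (hDp : 0 ≤ Dp) :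
    μ * (1 - 2 * η) * k ^ 2 + lam * η ^ 2 * (βS + 2 * μ * nK ^ 2) / 2 * Dp ^ 2 ≤
      η * (αS / 2) * Dp ^ 2 := by
  have hlam0 : (0:ℝ) < lam := lt_of_lt_of_le one_pos hlam
  have hm0 : 0 < μ * N ^ 2 := by positivity
  have hden : 0 < 2 * lam * (βS + 2 * μ * N ^ 2) := by positivity
  have hη0 : 0 < η := by rw [hη]; positivity
  have hηα : η * (2 * lam * (βS + 2 * μ * N ^ 2)) = αS := by
    rw [hη]; field_simp
  have hs2 : (Real.sqrt (lam * αS ^ 2 + lam ^ 2 * βS ^ 2)) ^ 2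
      = lam * αS ^ 2 + lam ^ 2 * βS ^ 2 := Real.sq_sqrt (by positivity)
  have hs0 : 0 ≤ Real.sqrt (lam * αS ^ 2 + lam ^ 2 * βS ^ 2) := Real.sqrt_nonneg _
  have hc1 : lam * βS + 4 * lam * (μ * N ^ 2) ≤
      Real.sqrt (lam * αS ^ 2 + lam ^ 2 * βS ^ 2) := by
    rw [le_div_iff₀ (by positivity)] at hcond
    nlinarith
  have hc2 : 8 * lam * (μ * N ^ 2) * (βS + 2 * (μ * N ^ 2)) ≤ αS ^ 2 := by
    have h0 : 0 ≤ lam * βS + 4 * lam * (μ * N ^ 2) := by positivity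
    nlinarith [hc1, hs2, hs0]
  have hc3 : μ * N ^ 2 ≤ η * αS / 4 := by
    have he : η * αS / 4 = αS ^ 2 / (4 * (2 * lam * (βS + 2 * μ * N ^ 2))) := by
      rw [hη]; field_simp
    rw [he, le_div_iff₀ (by positivity)]
    nlinarith [hc2]
  have hk2 : k ^ 2 ≤ nK ^ 2 * Dp ^ 2 := by nlinarith
  have hN2 : nK ^ 2 ≤ N ^ 2 := by nlinarith
  have p1 : μ * (1 - 2 * η) * k ^ 2 ≤ η * αS / 4 * Dp ^ 2 := by
    have h1 : μ * (1 - 2 * η) * k ^ 2 ≤ μ * k ^ 2 := by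
      have e := mul_nonneg (mul_nonneg hμ.le hη0.le) (sq_nonneg k)
      nlinarith [e]
    have h2a : μ * k ^ 2 ≤ μ * (nK ^ 2 * Dp ^ 2) := mul_le_mul_of_nonneg_left hk2 hμ.le
    have h2c : μ * (nK ^ 2 * Dp ^ 2) ≤ μ * (N ^ 2 * Dp ^ 2) :=
      mul_le_mul_of_nonneg_left (mul_le_mul_of_nonneg_right hN2 (sq_nonneg Dp)) hμ.le
    have h3 : μ * N ^ 2 * Dp ^ 2 ≤ η * αS / 4 * Dp ^ 2 :=
      mul_le_mul_of_nonneg_right hc3 (sq_nonneg Dp)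
    nlinarith [h1, h2a, h2c, h3]
  have p2 : lam * η ^ 2 * (βS + 2 * μ * nK ^ 2) / 2 ≤ η * αS / 4 := by
    have h1 : lam * η * (βS + 2 * μ * nK ^ 2) ≤ αS / 2 := by
      nlinarith [mul_nonneg (mul_nonneg hlam0.le hη0.le)
        (mul_nonneg hμ.le (sub_nonneg.2 hN2))]
    nlinarith [mul_le_mul_of_nonneg_right h1 hη0.le]
  have p2' : lam * η ^ 2 * (βS + 2 * μ * nK ^ 2) / 2 * Dp ^ 2 ≤ η * αS / 4 * Dp ^ 2 :=
    mul_le_mul_of_nonneg_right p2 (sq_nonneg Dp)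
  nlinarith [p1, p2']

lemma aux_ereal_cancel {a b : ℝ} {X : EReal} (h : (a : EReal) + X = (b : EReal)) :
    X = ((b - a : ℝ) : EReal) := by
  have hXt : X ≠ ⊤ := by
    rintro rfl
    rw [EReal.add_top_of_ne_bot (EReal.coe_ne_bot a)] at h
    exact (EReal.coe_ne_top b) h.symm
  have hXb : X ≠ ⊥ := by
    rintro rfl
    rw [EReal.add_bot] at h
    exact (EReal.coe_ne_bot b) h.symm
  lift X to ℝ using ⟨hXt, hXb⟩
  rw [← EReal.coe_add] at h
  have := EReal.coe_eq_coe_iff.1 h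
  exact congrArg _ (by linarith)


/-- linear decay of the augmented Lagrangian gap: under the primal
quadratic gap property and the weak proximal oracle updates, with the prescribed step
sizes, `d_{t+1} ≤ (1−η)ᵗ d₁` for every `t ≥ 1`, where
`d_t := L_ρ(q_t,w_t) − L_ρ*`. -/
theorem linear_rate (f : E₁ → ℝ) (β ρ : ℝ) (hρ : 0 < ρ) (A : E₁ →L[ℝ] E₂)
    (RX : E₁ → EReal) (RY : E₂ → EReal)
    (RQ : WithLp 2 (E₁ × E₂) → EReal) (hRQ : ∀ q, RQ q = RX (xPart q) + RY (yPart q))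
    (hRXproper : ProperFun RX) (hRXlsc : LowerSemicontinuous RX) (hRXconv : ERConvexOn RX)
    (hRYproper : ProperFun RY) (hRYlsc : LowerSemicontinuous RY) (hRYconv : ERConvexOn RY)
    (hconv : ConvexOn ℝ Set.univ f) (hdiff : Differentiable ℝ f)
    (hsmooth : ∀ x₁ x₂ : E₁, ‖gradient f x₁ - gradient f x₂‖ ≤ β * ‖x₁ - x₂‖)
    -- the optimal set is nonempty (it is automatically closed and convex)
    (hPne : (OptSet f RQ A).Nonempty)
    -- `β_S` is a smoothness parameter of `S(·,w)`, independent of `w`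
    (βS : ℝ) (hβS0 : 0 ≤ βS)
    (hβS : ∀ w' : E₂, ∀ q₁ q₂ : WithLp 2 (E₁ × E₂),
      ‖gradS f A ρ q₁ w' - gradS f A ρ q₂ w'‖ ≤ βS * ‖q₁ - q₂‖)
    -- the primal quadratic gap property with parameter `α_S > 0`
    (αS : ℝ) (hαS : 0 < αS)
    (hPQG : ∀ q' : WithLp 2 (E₁ × E₂), RQ q' ≠ ⊤ → ∀ ps ∈ OptSet f RQ A,
      (∀ pt ∈ OptSet f RQ A, ‖q' - ps‖ ≤ ‖q' - pt‖) → ∀ w' : E₂,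
        ⟪ps - q', gradS f A ρ q' w'⟫ ≤
          SAL f A ρ ps w' - SAL f A ρ q' w' - αS / 2 * ‖ps - q'‖ ^ 2)
    -- a saddle point, with (common) saddle value `L_ρ*`
    (qsad : WithLp 2 (E₁ × E₂)) (wsad : E₂) (hsaddle : IsSaddle f RQ A ρ qsad wsad)
    (Lstar : ℝ) (hLstar : AL f RQ A ρ qsad wsad = (Lstar : EReal))
    -- the step sizes
    (lam : ℝ) (hlam : 1 ≤ lam) (μ : ℝ) (hμ : 0 < μ)
    (hμcond : 2 * μ * (‖A‖ + 1) ^ 2 ≤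
      (Real.sqrt (lam * αS ^ 2 + lam ^ 2 * βS ^ 2) - lam * βS) / (2 * lam))
    (η : ℝ) (hη : η = αS / (2 * lam * (βS + 2 * μ * (‖A‖ + 1) ^ 2)))
    (hη0 : 0 < η) (hη1 : η ≤ 1)
    -- the algorithm
    (q v : ℕ → WithLp 2 (E₁ × E₂)) (w : ℕ → E₂)
    (hq0 : RQ (q 0) ≠ ⊤)
    -- the weak proximal oracle condition at `(q_t, w_t)`
    (hWPO : ∀ t : ℕ, ∀ ps ∈ OptSet f RQ A,
      RQ (v t) + ((⟪v t, gradS f A ρ (q t) (w t) + (2 * μ) •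
            (ContinuousLinearMap.adjoint (Kmap A)) (Kmap A (q t))⟫ +
          1 / 2 * (η * (βS + 2 * μ * ‖Kmap A‖ ^ 2)) * ‖v t - q t‖ ^ 2 : ℝ) : EReal) ≤
      RQ ps + ((⟪ps, gradS f A ρ (q t) (w t) + (2 * μ) •
            (ContinuousLinearMap.adjoint (Kmap A)) (Kmap A (q t))⟫ +
          lam / 2 * (η * (βS + 2 * μ * ‖Kmap A‖ ^ 2)) * ‖ps - q t‖ ^ 2 : ℝ) : EReal))
    (hqstep : ∀ t : ℕ, q (t + 1) = (1 - η) • q t + η • v t)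
    (hwstep : ∀ t : ℕ, w (t + 1) = w t + μ • Kmap A (q (t + 1))) :
    ∀ t : ℕ, 1 ≤ t →
      AL f RQ A ρ (q (t + 1)) (w (t + 1)) - (Lstar : EReal) ≤
        (((1 - η) ^ t : ℝ) : EReal) * (AL f RQ A ρ (q 1) (w 1) - (Lstar : EReal)) := by
  classical
  -- ## basic non-⊥ facts
  have hRQnb : ∀ p, RQ p ≠ ⊥ := by
    intro p h
    rw [hRQ p] at h
    rcases EReal.add_eq_bot_iff.1 h with h | h
    · exact hRXproper.2 _ h
    · exact hRYproper.2 _ h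
  have hhnb : ∀ p, hOP f RQ p ≠ ⊥ := by
    intro p h
    simp only [hOP] at h
    rcases EReal.add_eq_bot_iff.1 h with h | h
    · exact EReal.coe_ne_bot _ h
    · exact hRQnb p h
  -- ## AL at feasible points
  have hALfeas : ∀ p, Kmap A p = 0 → ∀ w' : E₂, AL f RQ A ρ p w' = hOP f RQ p := by
    intro p hp w'
    simp only [AL, hp]
    norm_num
  -- ## the saddle point is feasible and optimal
  have hOPsad_ne_top : hOP f RQ qsad ≠ ⊤ := by
    intro h
    have h1 := hLstar
    simp only [AL, h] at h1
    rw [EReal.top_add_of_ne_bot (EReal.coe_ne_bot _)] at h1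
    exact (EReal.coe_ne_top Lstar) h1.symm
  obtain ⟨h0, hh0⟩ : ∃ r : ℝ, hOP f RQ qsad = (r : EReal) :=
    ⟨_, (EReal.coe_toReal hOPsad_ne_top (hhnb qsad)).symm⟩
  have hKsad : Kmap A qsad = 0 := by
    by_contra hKne
    have hk2 : (0:ℝ) < ‖Kmap A qsad‖ ^ 2 := by
      have h5 : ‖Kmap A qsad‖ ≠ 0 := fun hc => hKne (norm_eq_zero.1 hc)
      positivity
    have h1 := hLstar ▸ (hsaddle qsad (wsad + (‖Kmap A qsad‖ ^ 2)⁻¹ • Kmap A qsad)).1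
    have er : (⟪wsad + (‖Kmap A qsad‖ ^ 2)⁻¹ • Kmap A qsad, Kmap A qsad⟫ : ℝ)
        + ρ / 2 * ‖Kmap A qsad‖ ^ 2
        = (⟪wsad, Kmap A qsad⟫ + ρ / 2 * ‖Kmap A qsad‖ ^ 2) + 1 := by
      rw [inner_add_left, real_inner_smul_left, real_inner_self_eq_norm_sq]
      field_simp
      ring
    have e1 : AL f RQ A ρ qsad (wsad + (‖Kmap A qsad‖ ^ 2)⁻¹ • Kmap A qsad) =
        ((h0 + ((⟪wsad, Kmap A qsad⟫ + ρ / 2 * ‖Kmap A qsad‖ ^ 2) + 1) : ℝ) : EReal) := by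
      simp only [AL, hh0]
      rw [← EReal.coe_add, er]
    have e2 : AL f RQ A ρ qsad wsad =
        ((h0 + (⟪wsad, Kmap A qsad⟫ + ρ / 2 * ‖Kmap A qsad‖ ^ 2) : ℝ) : EReal) := by
      simp only [AL, hh0]
      rw [← EReal.coe_add]
    rw [e1] at h1
    rw [e2] at hLstar
    have h2 := EReal.coe_eq_coe_iff.1 hLstar
    have h3 := EReal.coe_le_coe_iff.1 h1
    linarith
  have hLval : Lstar = h0 := by
    have h1 := hLstar
    rw [hALfeas qsad hKsad wsad, hh0] at h1
    exact (EReal.coe_eq_coe_iff.1 h1).symm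
  have hsadOpt : qsad ∈ OptSet f RQ A := by
    refine ⟨hKsad, fun p hp => ?_⟩
    have h2 := (hsaddle p wsad).2
    rwa [hALfeas qsad hKsad wsad, hALfeas p hp wsad] at h2
  have hOPval : ∀ p ∈ OptSet f RQ A, hOP f RQ p = (Lstar : EReal) := by
    intro p hp
    refine le_antisymm ?_ ?_
    · have h1 := hp.2 qsad hKsad
      rwa [hh0, ← hLval] at h1
    · have h1 := hsadOpt.2 p hp.1
      rwa [hh0, ← hLval] at h1
  have hRQOpt : ∀ p ∈ OptSet f RQ A, RQ p = (((RQ p).toReal : ℝ) : EReal) ∧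
      f (xPart p) + (RQ p).toReal = Lstar := by
    intro p hp
    have h1 : ((f (xPart p) : ℝ) : EReal) + RQ p = (Lstar : EReal) := by
      have h2 := hOPval p hp
      simpa only [hOP] using h2
    have h2 := aux_ereal_cancel h1
    rw [h2]
    constructor
    · rw [EReal.toReal_coe]
    · rw [EReal.toReal_coe]
      ring
  -- ## closedness of the optimal set and nearest points
  have hXcont : Continuous (fun p : WithLp 2 (E₁ × E₂) => xPart p) :=
    (ContinuousLinearMap.fst ℝ E₁ E₂).continuous.comp
      (WithLp.prodContinuousLinearEquiv 2 ℝ E₁ E₂).continuous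
  have hYcont : Continuous (fun p : WithLp 2 (E₁ × E₂) => yPart p) :=
    (ContinuousLinearMap.snd ℝ E₁ E₂).continuous.comp
      (WithLp.prodContinuousLinearEquiv 2 ℝ E₁ E₂).continuous
  have hhlsc : LowerSemicontinuous (hOP f RQ) := by
    have h1 : LowerSemicontinuous (fun p : WithLp 2 (E₁ × E₂) => ((f (xPart p) : ℝ) : EReal)) :=
      (continuous_coe_real_ereal.comp ((hdiff.continuous).comp hXcont)).lowerSemicontinuous
    have h2 : LowerSemicontinuous RQ := by
      have h3 : LowerSemicontinuous (fun p : WithLp 2 (E₁ × E₂) => RX (xPart p)) :=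
        hRXlsc.comp hXcont
      have h4 : LowerSemicontinuous (fun p : WithLp 2 (E₁ × E₂) => RY (yPart p)) :=
        hRYlsc.comp hYcont
      have h5 := h3.add' h4 (fun p =>
        EReal.continuousAt_add (Or.inr (hRYproper.2 _)) (Or.inl (hRXproper.2 _)))
      have h6 : RQ = fun p => RX (xPart p) + RY (yPart p) := funext hRQ
      rw [h6]
      exact h5
    have h7 := h1.add' h2 (fun p =>
      EReal.continuousAt_add (Or.inl (EReal.coe_ne_top _)) (Or.inl (EReal.coe_ne_bot _)))
    exact h7
  have hOptClosed : IsClosed (OptSet f RQ A) := by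
    have he : OptSet f RQ A = (Kmap A) ⁻¹' {0} ∩ {p | hOP f RQ p ≤ (Lstar : EReal)} := by
      ext p
      constructor
      · intro hp
        exact ⟨hp.1, le_of_eq (hOPval p hp)⟩
      · rintro ⟨hp1, hp2⟩
        refine ⟨hp1, fun p' hp' => ?_⟩
        refine le_trans hp2 ?_
        have h1 := hsadOpt.2 p' hp'
        rwa [hh0, ← hLval] at h1
    rw [he]
    exact (isClosed_singleton.preimage (Kmap A).continuous).inter
      (hhlsc.isClosed_preimage (Lstar : EReal))
  have hnear : ∀ p : WithLp 2 (E₁ × E₂), ∃ ps ∈ OptSet f RQ A,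
      ∀ pt ∈ OptSet f RQ A, ‖p - ps‖ ≤ ‖p - pt‖ := by
    intro p
    obtain ⟨ps, hps, hd⟩ := hOptClosed.exists_infDist_eq_dist hPne p
    refine ⟨ps, hps, fun pt hpt => ?_⟩
    rw [← dist_eq_norm, ← dist_eq_norm, ← hd]
    exact Metric.infDist_le_dist_of_mem hpt
  -- ## real representation of AL
  have hALrepr : ∀ p, ∀ w' : E₂, RQ p ≠ ⊤ →
      AL f RQ A ρ p w' = ((SAL f A ρ p w' + (RQ p).toReal : ℝ) : EReal) := by
    intro p w' hp
    obtain ⟨r, hr⟩ : ∃ r : ℝ, RQ p = (r : EReal) := ⟨_, (EReal.coe_toReal hp (hRQnb p)).symm⟩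
    simp only [AL, hOP, SAL, hr, EReal.toReal_coe]
    rw [← EReal.coe_add, ← EReal.coe_add, EReal.coe_eq_coe_iff]
    ring
  -- ## operator norm bound
  have hxle : ∀ p : WithLp 2 (E₁ × E₂), ‖xPart p‖ ≤ ‖p‖ := by
    intro p
    have h := WithLp.prod_norm_sq_eq_of_L2 p
    have h2 : ‖xPart p‖ ^ 2 ≤ ‖p‖ ^ 2 := by
      rw [h]; exact le_add_of_nonneg_right (sq_nonneg _)
    nlinarith [norm_nonneg (xPart p), norm_nonneg p]
  have hyle : ∀ p : WithLp 2 (E₁ × E₂), ‖yPart p‖ ≤ ‖p‖ := by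
    intro p
    have h := WithLp.prod_norm_sq_eq_of_L2 p
    have h2 : ‖yPart p‖ ^ 2 ≤ ‖p‖ ^ 2 := by
      rw [h]; exact le_add_of_nonneg_left (sq_nonneg _)
    nlinarith [norm_nonneg (yPart p), norm_nonneg p]
  have hKnorm : ‖Kmap A‖ ≤ ‖A‖ + 1 := by
    refine ContinuousLinearMap.opNorm_le_bound _ (by positivity) fun p => ?_
    calc ‖Kmap A p‖ = ‖A (xPart p) - yPart p‖ := rfl
      _ ≤ ‖A (xPart p)‖ + ‖yPart p‖ := norm_sub_le _ _
      _ ≤ ‖A‖ * ‖xPart p‖ + ‖yPart p‖ := by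
          exact add_le_add_left (A.le_opNorm _) _
      _ ≤ ‖A‖ * ‖p‖ + ‖p‖ :=
          add_le_add (mul_le_mul_of_nonneg_left (hxle p) (norm_nonneg A)) (hyle p)
      _ = (‖A‖ + 1) * ‖p‖ := by ring
  -- ## differentiability / gradients
  have hSdiff : ∀ (w' : E₂) (p : WithLp 2 (E₁ × E₂)),
      DifferentiableAt ℝ (fun p' => SAL f A ρ p' w') p := by
    intro w' p
    have h1 : DifferentiableAt ℝ (fun p' : WithLp 2 (E₁ × E₂) => f (xPart p')) p := by
      have hX : DifferentiableAt ℝ (fun p' : WithLp 2 (E₁ × E₂) => xPart p') p :=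
        ContinuousLinearMap.differentiableAt ((ContinuousLinearMap.fst ℝ E₁ E₂).comp
          (WithLp.prodContinuousLinearEquiv 2 ℝ E₁ E₂).toContinuousLinearMap)
      exact DifferentiableAt.comp p (hdiff _) hX
    have h2 : DifferentiableAt ℝ (fun p' => (⟪w', Kmap A p'⟫ : ℝ)) p :=
      (differentiableAt_const w').inner ℝ (Kmap A).differentiableAt
    have h3 : DifferentiableAt ℝ (fun p' => ρ / 2 * ‖Kmap A p'‖ ^ 2) p :=
      (aux_grad_normsq (Kmap A) (ρ / 2) p).differentiableAt
    exact (h1.add h2).add h3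
  have hSgrad : ∀ (w' : E₂) (p : WithLp 2 (E₁ × E₂)),
      HasGradientAt (fun p' => SAL f A ρ p' w') (gradS f A ρ p w') p :=
    fun w' p => (hSdiff w' p).hasGradientAt
  have hGgrad : ∀ (w' : E₂) (p : WithLp 2 (E₁ × E₂)),
      HasGradientAt (fun p' => SAL f A ρ p' w' + μ * ‖Kmap A p'‖ ^ 2)
        (gradS f A ρ p w' + (2 * μ) • (ContinuousLinearMap.adjoint (Kmap A)) (Kmap A p)) p :=
    fun w' p => aux_grad_add (hSgrad w' p) (aux_grad_normsq (Kmap A) μ p)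
  have hGlip : ∀ (w' : E₂) (p₁ p₂ : WithLp 2 (E₁ × E₂)),
      ‖(gradS f A ρ p₁ w' + (2 * μ) • (ContinuousLinearMap.adjoint (Kmap A)) (Kmap A p₁)) -
        (gradS f A ρ p₂ w' + (2 * μ) • (ContinuousLinearMap.adjoint (Kmap A)) (Kmap A p₂))‖ ≤
      (βS + 2 * μ * ‖Kmap A‖ ^ 2) * ‖p₁ - p₂‖ := by
    intro w' p₁ p₂
    have h1 := hβS w' p₁ p₂
    have h2 : ‖(2 * μ) • (ContinuousLinearMap.adjoint (Kmap A)) (Kmap A p₁) -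
        (2 * μ) • (ContinuousLinearMap.adjoint (Kmap A)) (Kmap A p₂)‖ ≤
        2 * μ * ‖Kmap A‖ ^ 2 * ‖p₁ - p₂‖ := by
      rw [← smul_sub, ← map_sub, ← map_sub, norm_smul]
      have h3 : ‖(ContinuousLinearMap.adjoint (Kmap A)) (Kmap A (p₁ - p₂))‖ ≤
          ‖Kmap A‖ * ‖Kmap A (p₁ - p₂)‖ := by
        have h5 : ‖ContinuousLinearMap.adjoint (Kmap A)‖ = ‖Kmap A‖ :=
          ContinuousLinearMap.adjoint.norm_map (Kmap A)
        calc ‖(ContinuousLinearMap.adjoint (Kmap A)) (Kmap A (p₁ - p₂))‖ ≤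
            ‖ContinuousLinearMap.adjoint (Kmap A)‖ * ‖Kmap A (p₁ - p₂)‖ :=
              (ContinuousLinearMap.adjoint (Kmap A)).le_opNorm _
          _ = ‖Kmap A‖ * ‖Kmap A (p₁ - p₂)‖ := by rw [h5]
      have h4 : ‖Kmap A (p₁ - p₂)‖ ≤ ‖Kmap A‖ * ‖p₁ - p₂‖ := (Kmap A).le_opNorm _
      have h6 : ‖(2 * μ : ℝ)‖ = 2 * μ := by
        rw [Real.norm_eq_abs, abs_of_pos (by linarith)]
      rw [h6]
      have h8 := (Kmap A).opNorm_nonneg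
      have h9 := mul_le_mul_of_nonneg_left h4 h8
      have h10 := mul_le_mul_of_nonneg_left (h3.trans h9) (by linarith : (0:ℝ) ≤ 2 * μ)
      nlinarith [h10]
    calc ‖(gradS f A ρ p₁ w' + (2 * μ) • (ContinuousLinearMap.adjoint (Kmap A)) (Kmap A p₁)) -
        (gradS f A ρ p₂ w' + (2 * μ) • (ContinuousLinearMap.adjoint (Kmap A)) (Kmap A p₂))‖ =
        ‖(gradS f A ρ p₁ w' - gradS f A ρ p₂ w') +
          ((2 * μ) • (ContinuousLinearMap.adjoint (Kmap A)) (Kmap A p₁) -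
           (2 * μ) • (ContinuousLinearMap.adjoint (Kmap A)) (Kmap A p₂))‖ := by
          congr 1
          abel
      _ ≤ ‖gradS f A ρ p₁ w' - gradS f A ρ p₂ w'‖ +
          ‖(2 * μ) • (ContinuousLinearMap.adjoint (Kmap A)) (Kmap A p₁) -
           (2 * μ) • (ContinuousLinearMap.adjoint (Kmap A)) (Kmap A p₂)‖ := norm_add_le _ _
      _ ≤ (βS + 2 * μ * ‖Kmap A‖ ^ 2) * ‖p₁ - p₂‖ := by
          rw [add_mul]
          exact add_le_add h1 h2
  -- ## the one-step inequality
  have step : ∀ s : ℕ, RQ (q s) ≠ ⊤ → RQ (q (s + 1)) ≠ ⊤ ∧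
      SAL f A ρ (q (s + 1)) (w (s + 1)) + (RQ (q (s + 1))).toReal - Lstar ≤
        (1 - η) * (SAL f A ρ (q s) (w s) + (RQ (q s)).toReal - Lstar) := by
    intro s hfin
    obtain ⟨ps, hpsOpt, hpsNear⟩ := hnear (q s)
    have hKps : Kmap A ps = 0 := hpsOpt.1
    obtain ⟨hRQpsE, hvalps⟩ := hRQOpt ps hpsOpt
    -- PQG inequality
    have I1 := hPQG (q s) hfin ps hpsOpt hpsNear (w s)
    -- WPO inequality, extracted to the reals
    have hwpo := hWPO s ps hpsOpt
    have hvtop : RQ (v s) ≠ ⊤ := by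
      intro hv
      rw [hv, hRQpsE] at hwpo
      rw [EReal.top_add_of_ne_bot (EReal.coe_ne_bot _), ← EReal.coe_add] at hwpo
      exact (EReal.coe_lt_top _).not_ge hwpo
    obtain ⟨rv, hrv⟩ : ∃ r : ℝ, RQ (v s) = (r : EReal) :=
      ⟨_, (EReal.coe_toReal hvtop (hRQnb _)).symm⟩
    rw [hrv, hRQpsE, ← EReal.coe_add, ← EReal.coe_add] at hwpo
    have I2 := EReal.coe_le_coe_iff.1 hwpo
    -- inner-product identities
    have e_inner_v : (⟪v s, gradS f A ρ (q s) (w s) +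
        (2 * μ) • (ContinuousLinearMap.adjoint (Kmap A)) (Kmap A (q s))⟫ : ℝ) -
        ⟪q s, gradS f A ρ (q s) (w s) +
        (2 * μ) • (ContinuousLinearMap.adjoint (Kmap A)) (Kmap A (q s))⟫ =
        ⟪v s - q s, gradS f A ρ (q s) (w s) +
        (2 * μ) • (ContinuousLinearMap.adjoint (Kmap A)) (Kmap A (q s))⟫ :=
      (inner_sub_left _ _ _).symm
    have e_inner_ps : (⟪ps, gradS f A ρ (q s) (w s) +
        (2 * μ) • (ContinuousLinearMap.adjoint (Kmap A)) (Kmap A (q s))⟫ : ℝ) -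
        ⟪q s, gradS f A ρ (q s) (w s) +
        (2 * μ) • (ContinuousLinearMap.adjoint (Kmap A)) (Kmap A (q s))⟫ =
        ⟪ps - q s, gradS f A ρ (q s) (w s)⟫ - 2 * μ * ‖Kmap A (q s)‖ ^ 2 := by
      rw [← inner_sub_left, inner_add_right, real_inner_smul_right,
        ContinuousLinearMap.adjoint_inner_right, map_sub, hKps, zero_sub, inner_neg_left,
        real_inner_self_eq_norm_sq]
      ring
    -- descent
    have hqdiff : q (s + 1) - q s = η • (v s - q s) := by
      rw [hqstep s, sub_smul, one_smul, smul_sub]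
      abel
    have DSC : SAL f A ρ (q (s + 1)) (w s) + μ * ‖Kmap A (q (s + 1))‖ ^ 2 ≤
        SAL f A ρ (q s) (w s) + μ * ‖Kmap A (q s)‖ ^ 2 +
        η * ⟪v s - q s, gradS f A ρ (q s) (w s) +
          (2 * μ) • (ContinuousLinearMap.adjoint (Kmap A)) (Kmap A (q s))⟫ +
        (βS + 2 * μ * ‖Kmap A‖ ^ 2) / 2 * (η ^ 2 * ‖v s - q s‖ ^ 2) := by
      have h := aux_descent (fun p => SAL f A ρ p (w s) + μ * ‖Kmap A p‖ ^ 2)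
        (fun p => gradS f A ρ p (w s) +
          (2 * μ) • (ContinuousLinearMap.adjoint (Kmap A)) (Kmap A p))
        (fun z => hGgrad (w s) z) (βS + 2 * μ * ‖Kmap A‖ ^ 2) (hGlip (w s)) (q s) (q (s + 1))
      rw [hqdiff, real_inner_smul_right, norm_smul, Real.norm_eq_abs, abs_of_pos hη0,
        mul_pow] at h
      have hBc : (⟪gradS f A ρ (q s) (w s) +
          (2 * μ) • (ContinuousLinearMap.adjoint (Kmap A)) (Kmap A (q s)), v s - q s⟫ : ℝ) =
          ⟪v s - q s, gradS f A ρ (q s) (w s) +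
          (2 * μ) • (ContinuousLinearMap.adjoint (Kmap A)) (Kmap A (q s))⟫ :=
        real_inner_comm _ _
      rw [hBc] at h
      linarith [h]
    -- convexity of RQ along the step
    have hcomp : ∀ p : WithLp 2 (E₁ × E₂), RQ p ≠ ⊤ →
        RX (xPart p) ≠ ⊤ ∧ RY (yPart p) ≠ ⊤ := by
      intro p hp
      rw [hRQ p] at hp
      constructor
      · intro h; rw [h] at hp; exact hp (EReal.top_add_of_ne_bot (hRYproper.2 _))
      · intro h; rw [h] at hp; exact hp (EReal.add_top_of_ne_bot (hRXproper.2 _))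
    obtain ⟨hXq, hYq⟩ := hcomp (q s) hfin
    obtain ⟨hXv, hYv⟩ := hcomp (v s) hvtop
    obtain ⟨ax, hax⟩ : ∃ r : ℝ, RX (xPart (q s)) = (r : EReal) :=
      ⟨_, (EReal.coe_toReal hXq (hRXproper.2 _)).symm⟩
    obtain ⟨ay, hay⟩ : ∃ r : ℝ, RY (yPart (q s)) = (r : EReal) :=
      ⟨_, (EReal.coe_toReal hYq (hRYproper.2 _)).symm⟩
    obtain ⟨bx, hbx⟩ : ∃ r : ℝ, RX (xPart (v s)) = (r : EReal) :=
      ⟨_, (EReal.coe_toReal hXv (hRXproper.2 _)).symm⟩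
    obtain ⟨by', hby'⟩ : ∃ r : ℝ, RY (yPart (v s)) = (r : EReal) :=
      ⟨_, (EReal.coe_toReal hYv (hRYproper.2 _)).symm⟩
    have hrteq : (RQ (q s)).toReal = ax + ay := by
      rw [hRQ, hax, hay, ← EReal.coe_add, EReal.toReal_coe]
    have hrveq : rv = bx + by' := by
      have h1 : ((rv : ℝ) : EReal) = ((bx + by' : ℝ) : EReal) := by
        rw [← hrv, hRQ, hbx, hby', EReal.coe_add]
      exact EReal.coe_eq_coe_iff.1 h1
    have hxcomb : xPart (q (s + 1)) = (1 - η) • xPart (q s) + η • xPart (v s) := by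
      rw [hqstep s]; rfl
    have hycomb : yPart (q (s + 1)) = (1 - η) • yPart (q s) + η • yPart (v s) := by
      rw [hqstep s]; rfl
    have hcx : RX (xPart (q (s + 1))) ≤ (((1 - η) * ax + η * bx : ℝ) : EReal) := by
      rw [hxcomb]
      calc RX ((1 - η) • xPart (q s) + η • xPart (v s)) ≤
          ((1 - η : ℝ) : EReal) * RX (xPart (q s)) + ((η : ℝ) : EReal) * RX (xPart (v s)) :=
            hRXconv _ _ (1 - η) η (by linarith) hη0.le (by ring)
        _ = (((1 - η) * ax + η * bx : ℝ) : EReal) := by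
            rw [hax, hbx, ← EReal.coe_mul, ← EReal.coe_mul, ← EReal.coe_add]
    have hcy : RY (yPart (q (s + 1))) ≤ (((1 - η) * ay + η * by' : ℝ) : EReal) := by
      rw [hycomb]
      calc RY ((1 - η) • yPart (q s) + η • yPart (v s)) ≤
          ((1 - η : ℝ) : EReal) * RY (yPart (q s)) + ((η : ℝ) : EReal) * RY (yPart (v s)) :=
            hRYconv _ _ (1 - η) η (by linarith) hη0.le (by ring)
        _ = (((1 - η) * ay + η * by' : ℝ) : EReal) := by
            rw [hay, hby', ← EReal.coe_mul, ← EReal.coe_mul, ← EReal.coe_add]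
    have hsum : RQ (q (s + 1)) ≤
        ((((1 - η) * ax + η * bx) + ((1 - η) * ay + η * by') : ℝ) : EReal) := by
      rw [hRQ, EReal.coe_add]
      exact add_le_add hcx hcy
    have hfin1 : RQ (q (s + 1)) ≠ ⊤ := by
      intro h
      rw [h] at hsum
      exact (EReal.coe_lt_top _).not_ge hsum
    have hr1le : (RQ (q (s + 1))).toReal ≤ (1 - η) * (ax + ay) + η * (bx + by') := by
      have h1 := EReal.toReal_le_toReal hsum (hRQnb _) (EReal.coe_ne_top _)
      rw [EReal.toReal_coe] at h1
      linarith
    -- SAL identities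
    have hSps : SAL f A ρ ps (w s) = f (xPart ps) := by
      simp only [SAL, hKps]
      simp
    have hSnext : SAL f A ρ (q (s + 1)) (w (s + 1)) =
        SAL f A ρ (q (s + 1)) (w s) + μ * ‖Kmap A (q (s + 1))‖ ^ 2 := by
      simp only [SAL, hwstep s]
      rw [inner_add_left, real_inner_smul_left, real_inner_self_eq_norm_sq]
      ring
    -- the key scalar inequality
    have hknorm : ‖Kmap A (q s)‖ ≤ ‖Kmap A‖ * ‖ps - q s‖ := by
      have h1 : Kmap A (q s) = Kmap A (q s - ps) := by
        rw [map_sub, hKps, sub_zero]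
      rw [h1]
      calc ‖Kmap A (q s - ps)‖ ≤ ‖Kmap A‖ * ‖q s - ps‖ := (Kmap A).le_opNorm _
        _ = ‖Kmap A‖ * ‖ps - q s‖ := by rw [norm_sub_rev]
    have hkey := aux_scalar_key αS lam βS μ ‖Kmap A‖ (‖A‖ + 1) η ‖Kmap A (q s)‖ ‖ps - q s‖
      hαS hlam hβS0 hμ ((Kmap A).opNorm_nonneg) hKnorm (by positivity) hμcond hη
      (norm_nonneg _) hknorm (norm_nonneg _)
    -- assemble
    refine ⟨hfin1, ?_⟩
    have E2 : (⟪v s - q s, gradS f A ρ (q s) (w s) +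
        (2 * μ) • (ContinuousLinearMap.adjoint (Kmap A)) (Kmap A (q s))⟫ : ℝ) ≤
        ((RQ ps).toReal - rv) + (⟪ps - q s, gradS f A ρ (q s) (w s)⟫ -
          2 * μ * ‖Kmap A (q s)‖ ^ 2) +
        lam / 2 * (η * (βS + 2 * μ * ‖Kmap A‖ ^ 2)) * ‖ps - q s‖ ^ 2 -
        1 / 2 * (η * (βS + 2 * μ * ‖Kmap A‖ ^ 2)) * ‖v s - q s‖ ^ 2 := by
      linarith [I2, e_inner_v, e_inner_ps]
    have E2' := mul_le_mul_of_nonneg_left E2 hη0.le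
    have E3' := mul_le_mul_of_nonneg_left I1 hη0.le
    rw [hSps] at E3'
    nlinarith [DSC, E2', E3', hkey, hr1le, hrteq, hrveq, hvalps, hSnext]
  -- ## conclusion by induction
  have hfinall : ∀ s, RQ (q s) ≠ ⊤ := by
    intro s
    induction s with
    | zero => exact hq0
    | succ n ih => exact (step n ih).1
  have hrec : ∀ t : ℕ, 1 ≤ t →
      SAL f A ρ (q (t + 1)) (w (t + 1)) + (RQ (q (t + 1))).toReal - Lstar ≤
        (1 - η) ^ t * (SAL f A ρ (q 1) (w 1) + (RQ (q 1)).toReal - Lstar) := by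
    intro t ht
    induction t with
    | zero => simp at ht
    | succ n ih =>
      by_cases hn : n = 0
      · subst hn
        have h := (step 1 (hfinall 1)).2
        simpa [pow_one] using h
      · have hn1 : 1 ≤ n := Nat.one_le_iff_ne_zero.2 hn
        have ihn := ih hn1
        have h := (step (n + 1) (hfinall (n + 1))).2
        have h1η : (0:ℝ) ≤ 1 - η := by linarith
        calc SAL f A ρ (q (n + 1 + 1)) (w (n + 1 + 1)) + (RQ (q (n + 1 + 1))).toReal - Lstar ≤
            (1 - η) * (SAL f A ρ (q (n + 1)) (w (n + 1)) + (RQ (q (n + 1))).toReal - Lstar) := h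
          _ ≤ (1 - η) * ((1 - η) ^ n *
              (SAL f A ρ (q 1) (w 1) + (RQ (q 1)).toReal - Lstar)) :=
            mul_le_mul_of_nonneg_left ihn h1η
          _ = (1 - η) ^ (n + 1) * (SAL f A ρ (q 1) (w 1) + (RQ (q 1)).toReal - Lstar) := by
            ring
  intro t ht
  rw [hALrepr (q (t + 1)) (w (t + 1)) (hfinall (t + 1)), hALrepr (q 1) (w 1) (hfinall 1),
    ← EReal.coe_sub, ← EReal.coe_sub, ← EReal.coe_mul, EReal.coe_le_coe_iff]
  exact hrec t ht

end
end
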